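/- arXiv:2411.04790 — 4 statements merged into one kernel-verified Lean document; each statement's English description precedes it below -/
import Mathlib

section
/- Let n ≥ 0 be an integer, let ψ ∈ ℂ^(2^n) be a unit vector, and let F be a 2^n × 2^n complex matrix all of whose entries have modulus exactly 2^{−n/2}. Then the average over all sign vectors x ∈ {+1, −1}^{2^n} of ‖F·diag(x)·ψ‖₁ is at least 2^{n/2}/√2; that is, (1/2^{2^n})·Σ_{x ∈ {±1}^{2^n}} ‖F·diag(x)·ψ‖₁ ≥ 2^{n/2}/√2, where diag(x) is the diagonal matrix with diagonal entries given by x and ‖v‖₁ = Σ_i |v_i| is the ℓ1 norm. -/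
open scoped BigOperators
open scoped Matrix

noncomputable section

/-- The `q`-th (little-endian) bit of an index `i < 2^m`. -/
def qbit {m : ℕ} (i : Fin (2 ^ m)) (q : Fin m) : Fin 2 :=
  ⟨(i : ℕ) / 2 ^ (q : ℕ) % 2, Nat.mod_lt _ (by norm_num)⟩

/-- The ℓ² norm of a vector in `ℂ^N`. -/
def l2norm {N : ℕ} (v : Fin N → ℂ) : ℝ :=
  Real.sqrt (∑ i, Complex.normSq (v i))

/-- The ℓ¹ norm of a vector in `ℂ^N`. -/
def l1norm {N : ℕ} (v : Fin N → ℂ) : ℝ :=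
  ∑ i, ‖v i‖

/-- The standard basis vector of `ℂ^(2^k)` indexed by the all-zeros string. -/
def e0 (k : ℕ) : Fin (2 ^ k) → ℂ := fun i => if (i : ℕ) = 0 then 1 else 0

lemma tensor_div_lt {m k : ℕ} (i : Fin (2 ^ (m + k))) : (i : ℕ) / 2 ^ k < 2 ^ m := by
  apply Nat.div_lt_of_lt_mul
  calc (i : ℕ) < 2 ^ (m + k) := i.isLt
    _ = 2 ^ k * 2 ^ m := by rw [pow_add, mul_comm]

/-- Kronecker product of vectors: `ℂ^(2^m) ⊗ ℂ^(2^k) → ℂ^(2^(m+k))`. -/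
def vecTensor {m k : ℕ} (v : Fin (2 ^ m) → ℂ) (w : Fin (2 ^ k) → ℂ) :
    Fin (2 ^ (m + k)) → ℂ := fun i =>
  v ⟨(i : ℕ) / 2 ^ k, tensor_div_lt i⟩ *
    w ⟨(i : ℕ) % 2 ^ k, Nat.mod_lt _ (pow_pos (by norm_num) k)⟩

/-- The single-qubit Pauli matrices `I, X, Y, Z`. -/
def pauliBase : Fin 4 → Matrix (Fin 2) (Fin 2) ℂ :=
  ![!![1, 0; 0, 1], !![0, 1; 1, 0], !![0, -Complex.I; Complex.I, 0], !![1, 0; 0, -1]]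

/-- The Pauli operator `i^b • (P₁ ⊗ ⋯ ⊗ P_m)`. -/
def pauliOf {m : ℕ} (b : Fin 4) (p : Fin m → Fin 4) :
    Matrix (Fin (2 ^ m)) (Fin (2 ^ m)) ℂ :=
  Matrix.of fun i j => Complex.I ^ (b : ℕ) * ∏ q : Fin m, pauliBase (p q) (qbit i q) (qbit j q)

/-- `P` is an `m`-qubit Pauli operator. -/
def IsPauli {m : ℕ} (P : Matrix (Fin (2 ^ m)) (Fin (2 ^ m)) ℂ) : Prop :=
  ∃ b p, P = pauliOf b p

/-- `P` is a Hermitian `m`-qubit Pauli operator. -/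
def IsHermPauli {m : ℕ} (P : Matrix (Fin (2 ^ m)) (Fin (2 ^ m)) ℂ) : Prop :=
  IsPauli P ∧ Pᴴ = P

/-- `C` is an `m`-qubit Clifford unitary. -/
def IsClifford {m : ℕ} (C : Matrix (Fin (2 ^ m)) (Fin (2 ^ m)) ℂ) : Prop :=
  C ∈ Matrix.unitaryGroup (Fin (2 ^ m)) ℂ ∧
    ∀ P : Matrix (Fin (2 ^ m)) (Fin (2 ^ m)) ℂ, IsPauli P → IsPauli (C * P * Cᴴ)

/-- The `T` gate `diag(1, e^{iπ/4})`. -/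
def Tgate : Matrix (Fin 2) (Fin 2) ℂ :=
  !![1, 0; 0, Complex.exp (Complex.I * Real.pi / 4)]

/-- The `T` gate acting on qubit `q`, tensored with the identity on the remaining qubits. -/
def TgateOn {m : ℕ} (q : Fin m) : Matrix (Fin (2 ^ m)) (Fin (2 ^ m)) ℂ :=
  Matrix.diagonal fun i => Tgate (qbit i q) (qbit i q)

/-- `U` is a Clifford+T circuit on `m` qubits with exactly `t` T gates:
`U = C_{t+1} · T^{(q_t)} · C_t ⋯ T^{(q_1)} · C_1`. -/
def IsCTCircuit {m : ℕ} : ℕ → Matrix (Fin (2 ^ m)) (Fin (2 ^ m)) ℂ → Prop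
  | 0, U => IsClifford U
  | t + 1, U => ∃ C q V, IsClifford C ∧ IsCTCircuit t V ∧ U = C * TgateOn q * V

/-- `⟨u, v⟩ = ∑ conj(uᵢ)·vᵢ`. -/
def cInner {N : ℕ} (u v : Fin N → ℂ) : ℂ := ∑ i, (starRingEnd ℂ) (u i) * v i

/-- The Choi state of an `n`-qubit unitary `U`. -/
def choi {n : ℕ} (U : Matrix (Fin (2 ^ n)) (Fin (2 ^ n)) ℂ) : Fin (2 ^ (n + n)) → ℂ :=
  ((Real.sqrt (2 ^ n) : ℂ))⁻¹ •
    ∑ x : Fin (2 ^ n),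
      vecTensor (fun i => if i = x then 1 else 0) (U.mulVec fun i => if i = x then 1 else 0)

/-- The normalized Hilbert–Schmidt norm `√(Tr(A†A)/d)`. -/
def hsnorm {d : ℕ} (A : Matrix (Fin d) (Fin d) ℂ) : ℝ :=
  Real.sqrt ((Aᴴ * A).trace.re / d)

/-- The `n`-qubit Hadamard transform, with entries `2^{-n/2}·(-1)^{x·y}`. -/
def hadamardPow (n : ℕ) : Matrix (Fin (2 ^ n)) (Fin (2 ^ n)) ℂ :=
  Matrix.of fun i j =>
    ((Real.sqrt (2 ^ n) : ℂ))⁻¹ * (-1) ^ (∑ q : Fin n, (qbit i q : ℕ) * (qbit j q : ℕ))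

/-- A Boolean phase oracle: a diagonal matrix with ±1 diagonal entries. -/
def IsPhaseOracle {n : ℕ} (B : Matrix (Fin (2 ^ n)) (Fin (2 ^ n)) ℂ) : Prop :=
  ∃ d : Fin (2 ^ n) → ℂ, (∀ i, d i = 1 ∨ d i = -1) ∧ B = Matrix.diagonal d

/-- The magic state `|T⟩ = (|0⟩ + e^{iπ/4}|1⟩)/√2`. -/
def magic : Fin 2 → ℂ :=
  ![(Real.sqrt 2 : ℂ)⁻¹, (Real.sqrt 2 : ℂ)⁻¹ * Complex.exp (Complex.I * Real.pi / 4)]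

/-- `|T⟩^{⊗t}`. -/
def magicPow (t : ℕ) : Fin (2 ^ t) → ℂ := fun i => ∏ q : Fin t, magic (qbit i q)

/-- The Kronecker product `U 0 ⊗ U 1 ⊗ ⋯ ⊗ U (m-1)` of single-qubit matrices. -/
def kronPow {m : ℕ} (U : Fin m → Matrix (Fin 2) (Fin 2) ℂ) :
    Matrix (Fin (2 ^ m)) (Fin (2 ^ m)) ℂ :=
  Matrix.of fun i j => ∏ q : Fin m, U q (qbit i q) (qbit j q)

/-- The product `C_{m+1}·(I+P_m)·C_m ⋯ (I+P_1)·C_1` (0-indexed). -/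
def postProd {N : ℕ} : (m : ℕ) → (Fin (m + 1) → Matrix (Fin N) (Fin N) ℂ) →
    (Fin m → Matrix (Fin N) (Fin N) ℂ) → Matrix (Fin N) (Fin N) ℂ
  | 0, C, _ => C 0
  | m + 1, C, P =>
      C (Fin.last (m + 1)) * (1 + P (Fin.last m)) *
        postProd m (fun j => C j.castSucc) (fun j => P j.castSucc)

/-- The product `(I+P_c)·(I+P_{c-1}) ⋯ (I+P_1)` (0-indexed). -/
def projProd {N : ℕ} : (c : ℕ) → (Fin c → Matrix (Fin N) (Fin N) ℂ) → Matrix (Fin N) (Fin N) ℂ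
  | 0, _ => 1
  | c + 1, P => (1 + P (Fin.last c)) * projProd c (fun j => P j.castSucc)

lemma blockDiag_lt {n : ℕ} (i : Fin (2 ^ (n + 1))) : (i : ℕ) / 2 < 2 ^ n := by
  apply Nat.div_lt_of_lt_mul
  calc (i : ℕ) < 2 ^ (n + 1) := i.isLt
    _ = 2 * 2 ^ n := by rw [pow_succ, mul_comm]

/-- The block-diagonal matrix `diag(U_1, …, U_{2^n})` with 2×2 diagonal blocks. -/
def blockDiag2 {n : ℕ} (U : Fin (2 ^ n) → Matrix (Fin 2) (Fin 2) ℂ) :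
    Matrix (Fin (2 ^ (n + 1))) (Fin (2 ^ (n + 1))) ℂ :=
  Matrix.of fun i j =>
    if (i : ℕ) / 2 = (j : ℕ) / 2 then
      U ⟨(i : ℕ) / 2, blockDiag_lt i⟩ ⟨(i : ℕ) % 2, Nat.mod_lt _ (by norm_num)⟩
        ⟨(j : ℕ) % 2, Nat.mod_lt _ (by norm_num)⟩
    else 0

/-- The stabilizer group of a family of `n`-qubit states, as a set of Pauli operators. -/
def stabFamily {n : ℕ} {S : Type*} (f : S → (Fin (2 ^ n) → ℂ)) :
    Set (Matrix (Fin (2 ^ n)) (Fin (2 ^ n)) ℂ) :=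
  {P | IsPauli P ∧ ∀ lam : S, P.mulVec (f lam) = f lam}

section KhAux
set_option linter.unusedSectionVars false
open Finset

section Walsh
variable {ι : Type*} [Fintype ι] [DecidableEq ι]

/-- sign of a boolean -/
def sg (b : Bool) : ℝ := if b then 1 else -1

lemma sg_mul_self (b : Bool) : sg b * sg b = 1 := by cases b <;> simp [sg]

lemma sg_not (b : Bool) : sg (!b) = - sg b := by cases b <;> simp [sg]

/-- Walsh character -/
def wchi (T : Finset ι) (x : ι → Bool) : ℝ := ∏ i ∈ T, sg (x i)

/-- flip one coordinate -/
def bflip (i : ι) (x : ι → Bool) : ι → Bool := Function.update x i (!(x i))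

lemma bflip_invol (i : ι) : Function.Involutive (bflip (ι := ι) i) := by
  intro x
  funext j
  by_cases h : j = i
  · subst h; simp [bflip, Function.update_apply]
  · simp [bflip, Function.update_apply, h]

lemma wdelta (x y : ι → Bool) :
    ∑ T : Finset ι, wchi T x * wchi T y
      = if x = y then (2 : ℝ) ^ (Fintype.card ι) else 0 := by
  have h1 : ∀ T : Finset ι, wchi T x * wchi T y
      = (∏ i ∈ T, sg (x i) * sg (y i)) * ∏ i ∈ (univ \ T), (1:ℝ) := by
    intro T; simp [wchi, Finset.prod_mul_distrib]
  have h2 : ∑ T : Finset ι, wchi T x * wchi T y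
      = ∏ i : ι, (sg (x i) * sg (y i) + 1) := by
    rw [Finset.prod_add]
    rw [← Finset.powerset_univ]
    exact Finset.sum_congr rfl (fun T _ => h1 T)
  rw [h2]
  by_cases hxy : x = y
  · subst hxy
    simp only [if_pos rfl]
    have : ∀ i : ι, sg (x i) * sg (x i) + 1 = 2 := by
      intro i; rw [sg_mul_self]; norm_num
    rw [Finset.prod_congr rfl (fun i _ => this i), Finset.prod_const, Finset.card_univ]
    simp
  · rw [if_neg hxy]
    have : ∃ i, x i ≠ y i := by
      by_contra h
      push_neg at h
      exact hxy (funext h)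
    obtain ⟨i, hi⟩ := this
    apply Finset.prod_eq_zero (Finset.mem_univ i)
    have : sg (x i) * sg (y i) = -1 := by
      cases hx : x i <;> cases hy : y i <;> simp_all [sg]
    rw [this]; norm_num

lemma winversion (f : (ι → Bool) → ℝ) (x : ι → Bool) :
    ∑ T : Finset ι, (∑ y, f y * wchi T y) * wchi T x
      = (2 : ℝ) ^ (Fintype.card ι) * f x := by
  have : ∀ T : Finset ι, (∑ y, f y * wchi T y) * wchi T x
      = ∑ y, f y * (wchi T y * wchi T x) := by
    intro T; rw [Finset.sum_mul]; exact Finset.sum_congr rfl (fun y _ => by ring)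
  rw [Finset.sum_congr rfl (fun T _ => this T), Finset.sum_comm]
  have : ∀ y, ∑ T : Finset ι, f y * (wchi T y * wchi T x)
      = f y * (if y = x then (2 : ℝ) ^ (Fintype.card ι) else 0) := by
    intro y
    rw [← Finset.mul_sum, wdelta]
  rw [Finset.sum_congr rfl (fun y _ => this y)]
  simp [Finset.sum_ite_eq', mul_comm]

lemma wparseval (f g : (ι → Bool) → ℝ) :
    ∑ T : Finset ι, (∑ y, f y * wchi T y) * (∑ y, g y * wchi T y)
      = (2 : ℝ) ^ (Fintype.card ι) * ∑ x, f x * g x := by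
  have : ∀ T : Finset ι, (∑ y, f y * wchi T y) * (∑ y, g y * wchi T y)
      = ∑ x, g x * ((∑ y, f y * wchi T y) * wchi T x) := by
    intro T
    rw [Finset.mul_sum]
    exact Finset.sum_congr rfl (fun x _ => by ring)
  rw [Finset.sum_congr rfl (fun T _ => this T), Finset.sum_comm]
  rw [Finset.mul_sum]
  apply Finset.sum_congr rfl
  intro x _
  rw [← Finset.mul_sum, winversion]
  ring

lemma wchi_bflip (i : ι) (T : Finset ι) (x : ι → Bool) :
    wchi T (bflip i x) = (if i ∈ T then (-1:ℝ) else 1) * wchi T x := by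
  by_cases hiT : i ∈ T
  · rw [if_pos hiT]
    unfold wchi
    rw [← Finset.prod_erase_mul T _ hiT, ← Finset.prod_erase_mul T _ hiT]
    have h1 : ∀ j ∈ T.erase i, sg (bflip i x j) = sg (x j) := by
      intro j hj
      have : j ≠ i := Finset.ne_of_mem_erase hj
      simp [bflip, Function.update_apply, this]
    rw [Finset.prod_congr rfl h1]
    have : sg (bflip i x i) = - sg (x i) := by
      simp [bflip, Function.update_apply, sg_not]
    rw [this]; ring
  · rw [if_neg hiT, one_mul]
    unfold wchi
    apply Finset.prod_congr rfl
    intro j hj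
    have : j ≠ i := fun h => hiT (h ▸ hj)
    simp [bflip, Function.update_apply, this]

lemma wchi_flipAll (T : Finset ι) (x : ι → Bool) :
    wchi T (fun i => !(x i)) = (-1:ℝ) ^ T.card * wchi T x := by
  unfold wchi
  rw [← Finset.prod_const, ← Finset.prod_mul_distrib]
  exact Finset.prod_congr rfl (fun i _ => by rw [sg_not]; ring)

lemma what_bflip (f : (ι → Bool) → ℝ) (i : ι) (T : Finset ι) :
    (∑ y, f (bflip i y) * wchi T y)
      = (if i ∈ T then (-1:ℝ) else 1) * ∑ y, f y * wchi T y := by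
  have h0 : ∑ y, f (bflip i y) * wchi T y
      = ∑ y : ι → Bool, f (bflip i (bflip i y)) * wchi T (bflip i y) := by
    exact (Equiv.sum_comp (bflip_invol (ι := ι) i).toPerm
      (fun y => f (bflip i y) * wchi T y)).symm
  rw [h0]
  rw [Finset.mul_sum]
  apply Finset.sum_congr rfl
  intro y _
  rw [bflip_invol i y, wchi_bflip]
  ring

lemma what_flipAll (f : (ι → Bool) → ℝ) (T : Finset ι) :
    (∑ y, f (fun j => !(y j)) * wchi T y)
      = (-1:ℝ) ^ T.card * ∑ y, f y * wchi T y := by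
  have hinv : Function.Involutive (fun (x : ι → Bool) (j : ι) => !(x j)) := by
    intro x; funext j; simp
  have h0 : ∑ y, f (fun j => !(y j)) * wchi T y
      = ∑ y : ι → Bool, f (fun j => !(!(y j))) * wchi T (fun j => !(y j)) :=
    (Equiv.sum_comp hinv.toPerm (fun y => f (fun j => !(y j)) * wchi T y)).symm
  rw [h0, Finset.mul_sum]
  apply Finset.sum_congr rfl
  intro y _
  simp only [Bool.not_not]
  rw [wchi_flipAll]
  ring

end Walsh

section Core
variable {ι : Type*} [Fintype ι] [DecidableEq ι]

lemma pair_orth (i j : ι) :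
    ∑ x : ι → Bool, ((if x i then (1:ℂ) else -1) * (if x j then 1 else -1))
      = if i = j then ((2:ℂ) ^ (Fintype.card ι)) else 0 := by
  by_cases hij : i = j
  · subst hij
    rw [if_pos rfl]
    have : ∀ x : ι → Bool, ((if x i then (1:ℂ) else -1) * (if x i then 1 else -1)) = 1 := by
      intro x; cases h : x i <;> simp [h]
    rw [Finset.sum_congr rfl (fun x _ => this x), Finset.sum_const, Finset.card_univ]
    simp [Fintype.card_fun]
  · rw [if_neg hij]
    have h0 : ∑ x : ι → Bool, ((if x i then (1:ℂ) else -1) * (if x j then 1 else -1))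
        = ∑ x : ι → Bool, ((if (bflip i x) i then (1:ℂ) else -1) * (if (bflip i x) j then 1 else -1)) :=
      (Equiv.sum_comp (bflip_invol (ι := ι) i).toPerm
        (fun x => (if x i then (1:ℂ) else -1) * (if x j then 1 else -1))).symm
    have h1 : ∀ x : ι → Bool,
        ((if (bflip i x) i then (1:ℂ) else -1) * (if (bflip i x) j then 1 else -1))
        = - ((if x i then (1:ℂ) else -1) * (if x j then 1 else -1)) := by
      intro x
      have hbi : (bflip i x) i = !(x i) := by simp [bflip]
      have hbj : (bflip i x) j = x j := by
        have : j ≠ i := fun h => hij h.symm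
        simp [bflip, Function.update_apply, this]
      rw [hbi, hbj]
      cases h : x i <;> cases h' : x j <;> simp [h, h'] <;> norm_num
    have h2 := h0
    rw [Finset.sum_congr rfl (fun x _ => h1 x), Finset.sum_neg_distrib] at h2
    linear_combination h2 / 2

/-- Sharp Khintchine: core inequality. -/
lemma khintchine_core (a : ι → ℂ) :
    (2:ℝ) ^ (Fintype.card ι) * Real.sqrt ((∑ i, Complex.normSq (a i)) / 2)
      ≤ ∑ x : ι → Bool, ‖∑ i, (if x i then (1:ℂ) else -1) * a i‖ := by
  classical
  set N := Fintype.card ι with hN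
  set S : (ι → Bool) → ℂ := fun x => ∑ i, (if x i then (1:ℂ) else -1) * a i with hS
  set f : (ι → Bool) → ℝ := fun x => ‖S x‖ with hf
  set σ2 : ℝ := ∑ i, Complex.normSq (a i) with hσ2
  have hσ2nonneg : 0 ≤ σ2 := Finset.sum_nonneg (fun i _ => Complex.normSq_nonneg _)
  -- L² identity
  have hL2 : ∑ x : ι → Bool, (f x) ^ 2 = (2:ℝ) ^ N * σ2 := by
    have key : (∑ x : ι → Bool, ((Complex.normSq (S x) : ℂ)))
        = (2:ℂ) ^ N * (σ2 : ℂ) := by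
      have hconj : ∀ x : ι → Bool, (starRingEnd ℂ) (S x)
          = ∑ j, (if x j then (1:ℂ) else -1) * (starRingEnd ℂ) (a j) := by
        intro x
        rw [hS]
        rw [map_sum]
        apply Finset.sum_congr rfl
        intro j _
        rw [map_mul]
        congr 1
        cases h : x j <;> simp [h]
      have hexp : ∀ x : ι → Bool, ((Complex.normSq (S x) : ℂ))
          = ∑ i, ∑ j, ((if x i then (1:ℂ) else -1) * (if x j then 1 else -1))
              * (a i * (starRingEnd ℂ) (a j)) := by
        intro x
        rw [← Complex.mul_conj, hconj]
        nth_rewrite 1 [hS]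
        rw [Finset.sum_mul_sum]
        apply Finset.sum_congr rfl; intro i _
        apply Finset.sum_congr rfl; intro j _
        ring
      rw [Finset.sum_congr rfl (fun x _ => hexp x), Finset.sum_comm]
      have : ∀ i, ∑ x : ι → Bool, ∑ j, ((if x i then (1:ℂ) else -1) * (if x j then 1 else -1))
              * (a i * (starRingEnd ℂ) (a j))
          = ∑ j, (if i = j then ((2:ℂ) ^ N) else 0) * (a i * (starRingEnd ℂ) (a j)) := by
        intro i
        rw [Finset.sum_comm]
        apply Finset.sum_congr rfl; intro j _
        rw [← Finset.sum_mul, pair_orth]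
      rw [Finset.sum_congr rfl (fun i _ => this i)]
      have : ∀ i, ∑ j, (if i = j then ((2:ℂ) ^ N) else 0) * (a i * (starRingEnd ℂ) (a j))
          = (2:ℂ) ^ N * (Complex.normSq (a i) : ℂ) := by
        intro i
        rw [Finset.sum_eq_single i]
        · rw [if_pos rfl, Complex.mul_conj]
        · intro j _ hj; rw [if_neg (fun h => hj h.symm), zero_mul]
        · intro h; exact absurd (Finset.mem_univ i) h
      rw [Finset.sum_congr rfl (fun i _ => this i), ← Finset.mul_sum, hσ2]
      push_cast
      ring
    have : ((∑ x : ι → Bool, (f x)^2 : ℝ) : ℂ) = (((2:ℝ) ^ N * σ2 : ℝ) : ℂ) := by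
      push_cast
      rw [← key]
      apply Finset.sum_congr rfl
      intro x _
      have : f x = ‖S x‖ := rfl
      rw [this]
      norm_cast
      exact Complex.sq_norm _
    exact_mod_cast this
  -- evenness
  have heven : ∀ x : ι → Bool, f (fun i => !(x i)) = f x := by
    intro x
    have : S (fun i => !(x i)) = - S x := by
      rw [hS, ← Finset.sum_neg_distrib]
      apply Finset.sum_congr rfl
      intro i _
      cases h : x i <;> simp [h] <;> ring
    rw [hf]
    simp only [this, norm_neg]
  -- Lipschitz bound under flips
  have hlip : ∀ (i : ι) (x : ι → Bool), |f x - f (bflip i x)| ≤ 2 * ‖a i‖ := by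
    intro i x
    have hdiff : S x - S (bflip i x) = (2 * (if x i then (1:ℂ) else -1)) * a i := by
      rw [hS, ← Finset.sum_sub_distrib]
      rw [Finset.sum_eq_single i]
      · have hbi : (bflip i x) i = !(x i) := by simp [bflip]
        rw [hbi]
        cases h : x i <;> simp [h] <;> ring
      · intro j _ hj
        have : (bflip i x) j = x j := by simp [bflip, Function.update_apply, hj]
        rw [this, sub_self]
      · intro h; exact absurd (Finset.mem_univ i) h
    have h1 : |f x - f (bflip i x)| ≤ ‖S x - S (bflip i x)‖ :=
      abs_norm_sub_norm_le _ _
    rw [hdiff] at h1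
    have h2 : ‖(2 * (if x i then (1:ℂ) else -1)) * a i‖ = 2 * ‖a i‖ := by
      rw [norm_mul]
      congr 1
      cases h : x i <;> simp [h]
    rw [h2] at h1
    exact h1
  -- Fourier side
  set hat : Finset ι → ℝ := fun T => ∑ y : ι → Bool, f y * wchi T y with hhat
  have hParse : ∑ T : Finset ι, hat T ^ 2 = (2:ℝ)^N * ((2:ℝ)^N * σ2) := by
    simp only [hhat]
    have h := wparseval (ι := ι) f f
    calc ∑ T : Finset ι, (∑ y, f y * wchi T y)^2
        = ∑ T : Finset ι, (∑ y, f y * wchi T y) * (∑ y, f y * wchi T y) := by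
          apply Finset.sum_congr rfl; intro T _; ring
      _ = (2:ℝ)^(Fintype.card ι) * ∑ x, f x * f x := h
      _ = (2:ℝ)^N * ((2:ℝ)^N * σ2) := by
          have h2 : ∑ x : ι → Bool, f x * f x = ∑ x : ι → Bool, f x ^ 2 := by
            apply Finset.sum_congr rfl; intro x _; ring
          rw [h2, hL2]
  have hodd : ∀ T : Finset ι, Odd T.card → hat T = 0 := by
    intro T hT
    have h1 : hat T = ∑ y : ι → Bool, f (fun j => !(y j)) * wchi T y := by
      simp only [hhat]
      exact (Finset.sum_congr rfl (fun y _ => by rw [heven y])).symm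
    rw [what_flipAll, Odd.neg_one_pow hT] at h1
    have h2 : hat T = - hat T := by
      conv_lhs => rw [h1]
      simp only [hhat]
      ring
    linarith
  have hderiv : ∀ i : ι, (∑ T : Finset ι, if i ∈ T then hat T ^ 2 else 0)
      ≤ (2:ℝ)^N * ((2:ℝ)^N * Complex.normSq (a i)) := by
    intro i
    set d : (ι → Bool) → ℝ := fun x => (f x - f (bflip i x)) / 2 with hd
    have hhatd : ∀ T : Finset ι, (∑ y, d y * wchi T y) = if i ∈ T then hat T else 0 := by
      intro T
      have h3 : ∑ y, d y * wchi T y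
          = ((∑ y, f y * wchi T y) - (∑ y, f (bflip i y) * wchi T y)) / 2 := by
        rw [← Finset.sum_sub_distrib, Finset.sum_div]
        apply Finset.sum_congr rfl
        intro y _
        simp only [hd]
        ring
      rw [h3, what_bflip]
      by_cases hiT : i ∈ T
      · rw [if_pos hiT, if_pos hiT]; simp only [hhat]; ring
      · rw [if_neg hiT, if_neg hiT]; ring
    have hdb : ∀ x, d x * d x ≤ Complex.normSq (a i) := by
      intro x
      have h2 := hlip i x
      have h1 : |d x| ≤ ‖a i‖ := by
        have h4 : |d x| = |f x - f (bflip i x)| / 2 := by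
          simp only [hd]
          rw [abs_div]
          norm_num
        rw [h4]
        linarith
      calc d x * d x = |d x| * |d x| := (abs_mul_abs_self _).symm
        _ ≤ ‖a i‖ * ‖a i‖ :=
            mul_le_mul h1 h1 (abs_nonneg _) (norm_nonneg _)
        _ = Complex.normSq (a i) := by rw [← Complex.sq_norm]; ring
    have hp := wparseval (ι := ι) d d
    have hL : ∑ T : Finset ι, (∑ y, d y * wchi T y) * (∑ y, d y * wchi T y)
        = ∑ T : Finset ι, (if i ∈ T then hat T ^ 2 else 0) := by
      apply Finset.sum_congr rfl
      intro T _
      rw [hhatd T]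
      by_cases hiT : i ∈ T
      · rw [if_pos hiT, if_pos hiT]; ring
      · rw [if_neg hiT, if_neg hiT]; ring
    rw [hL] at hp
    rw [hp]
    have hcard : (Finset.univ : Finset (ι → Bool)).card = 2 ^ (Fintype.card ι) := by
      rw [Finset.card_univ]
      simp [Fintype.card_fun]
    calc (2:ℝ)^(Fintype.card ι) * ∑ x : ι → Bool, d x * d x
        ≤ (2:ℝ)^(Fintype.card ι) * ((2:ℝ)^(Fintype.card ι) * Complex.normSq (a i)) := by
          apply mul_le_mul_of_nonneg_left _ (by positivity)
          calc ∑ x : ι → Bool, d x * d x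
              ≤ ∑ _x : ι → Bool, Complex.normSq (a i) :=
                Finset.sum_le_sum (fun x _ => hdb x)
            _ = (2:ℝ)^(Fintype.card ι) * Complex.normSq (a i) := by
                rw [Finset.sum_const, hcard, nsmul_eq_mul]
                push_cast
                ring
      _ = (2:ℝ)^N * ((2:ℝ)^N * Complex.normSq (a i)) := rfl
  have hhat0 : hat ∅ = ∑ x : ι → Bool, f x := by
    simp only [hhat]
    apply Finset.sum_congr rfl
    intro y _
    simp [wchi]
  have hmain : ((2:ℝ)^N * ((2:ℝ)^N * σ2)) / 2 ≤ (hat ∅)^2 := by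
    have hsplit : ∑ T : Finset ι, hat T ^ 2
        = hat ∅ ^ 2 + ∑ T ∈ (Finset.univ : Finset (Finset ι)).erase ∅, hat T ^ 2 :=
      (Finset.add_sum_erase _ _ (Finset.mem_univ ∅)).symm
    have hbound : ∑ T ∈ (Finset.univ : Finset (Finset ι)).erase ∅, hat T ^ 2
        ≤ (1/2) * ∑ T : Finset ι, (T.card : ℝ) * hat T ^ 2 := by
      have h1 : ∀ T ∈ (Finset.univ : Finset (Finset ι)).erase ∅,
          hat T ^ 2 ≤ (1/2) * ((T.card : ℝ) * hat T ^ 2) := by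
        intro T hT
        have hTne : T ≠ ∅ := Finset.ne_of_mem_erase hT
        rcases Nat.lt_or_ge T.card 2 with h | h
        · have hc : T.card = 1 := by
            have hpos := Finset.card_pos.mpr (Finset.nonempty_iff_ne_empty.mpr hTne)
            omega
          have hz : hat T = 0 := hodd T (by rw [hc]; exact odd_one)
          rw [hz]
          norm_num
        · have h2 : (2:ℝ) ≤ (T.card : ℝ) := by exact_mod_cast h
          nlinarith [sq_nonneg (hat T)]
      calc ∑ T ∈ (Finset.univ : Finset (Finset ι)).erase ∅, hat T ^ 2
          ≤ ∑ T ∈ (Finset.univ : Finset (Finset ι)).erase ∅, (1/2) * ((T.card : ℝ) * hat T ^ 2) :=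
            Finset.sum_le_sum h1
        _ ≤ ∑ T : Finset ι, (1/2) * ((T.card : ℝ) * hat T ^ 2) :=
            Finset.sum_le_sum_of_subset_of_nonneg (Finset.erase_subset _ _)
              (by intro T _ _; positivity)
        _ = (1/2) * ∑ T : Finset ι, (T.card : ℝ) * hat T ^ 2 := by rw [Finset.mul_sum]
    have hcount : ∑ T : Finset ι, (T.card : ℝ) * hat T ^ 2
        = ∑ i : ι, ∑ T : Finset ι, (if i ∈ T then hat T ^ 2 else 0) := by
      rw [Finset.sum_comm]
      apply Finset.sum_congr rfl
      intro T _
      rw [Finset.sum_ite_mem, Finset.univ_inter, Finset.sum_const, nsmul_eq_mul]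
    have hub : ∑ i : ι, ∑ T : Finset ι, (if i ∈ T then hat T ^ 2 else 0)
        ≤ (2:ℝ)^N * ((2:ℝ)^N * σ2) := by
      calc ∑ i : ι, ∑ T : Finset ι, (if i ∈ T then hat T ^ 2 else 0)
          ≤ ∑ i : ι, (2:ℝ)^N * ((2:ℝ)^N * Complex.normSq (a i)) :=
            Finset.sum_le_sum (fun i _ => hderiv i)
        _ = (2:ℝ)^N * ((2:ℝ)^N * σ2) := by
            rw [hσ2, ← Finset.mul_sum, ← Finset.mul_sum]
    nlinarith [hsplit, hbound, hcount, hub, hParse]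
  have hpos : 0 ≤ ∑ x : ι → Bool, f x :=
    Finset.sum_nonneg (fun x _ => norm_nonneg _)
  have hsq : ((2:ℝ)^N * Real.sqrt (σ2 / 2))^2 ≤ (∑ x : ι → Bool, f x)^2 := by
    rw [mul_pow, Real.sq_sqrt (by positivity)]
    rw [← hhat0]
    nlinarith [hmain]
  have hA : (0:ℝ) ≤ (2:ℝ)^N * Real.sqrt (σ2 / 2) := by positivity
  calc (2:ℝ)^N * Real.sqrt (σ2 / 2)
      = Real.sqrt (((2:ℝ)^N * Real.sqrt (σ2 / 2))^2) := (Real.sqrt_sq hA).symm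
    _ ≤ Real.sqrt ((∑ x : ι → Bool, f x)^2) := Real.sqrt_le_sqrt hsq
    _ = ∑ x : ι → Bool, f x := Real.sqrt_sq hpos


end Core

end KhAux

/-- Lemma 8: flattening the amplitudes of a quantum state. -/
theorem flattening (n : ℕ) (ψ : Fin (2 ^ n) → ℂ) (hψ : l2norm ψ = 1)
    (F : Matrix (Fin (2 ^ n)) (Fin (2 ^ n)) ℂ)
    (hF : ∀ i j, ‖F i j‖ = (Real.sqrt (2 ^ n))⁻¹) :
    Real.sqrt (2 ^ n) / Real.sqrt 2 ≤
      (1 / 2 ^ (2 ^ n)) *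
        ∑ x : Fin (2 ^ n) → Bool,
          l1norm (F.mulVec fun i => (if x i then 1 else -1) * ψ i) := by
  classical
  have h2npos : (0:ℝ) < 2 ^ n := by positivity
  have hsum1 : ∑ i, Complex.normSq (ψ i) = 1 := by
    have h := hψ
    rw [l2norm] at h
    exact Real.sqrt_eq_one.mp h
  have hrow : ∀ j : Fin (2^n),
      ∑ i, Complex.normSq (F j i * ψ i) = ((2:ℝ)^n)⁻¹ := by
    intro j
    have h1 : ∀ i, Complex.normSq (F j i * ψ i) = ((2:ℝ)^n)⁻¹ * Complex.normSq (ψ i) := by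
      intro i
      rw [Complex.normSq_mul]
      congr 1
      rw [← Complex.sq_norm, hF j i, inv_pow, Real.sq_sqrt (le_of_lt h2npos)]
    rw [Finset.sum_congr rfl (fun i _ => h1 i), ← Finset.mul_sum, hsum1, mul_one]
  have hkey : ∀ j : Fin (2^n),
      (2:ℝ)^(2^n : ℕ) * Real.sqrt (((2:ℝ)^n)⁻¹ / 2)
        ≤ ∑ x : Fin (2^n) → Bool,
            ‖(F.mulVec fun i => (if x i then 1 else -1) * ψ i) j‖ := by
    intro j
    have hk := khintchine_core (ι := Fin (2^n)) (fun i => F j i * ψ i)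
    rw [Fintype.card_fin, hrow j] at hk
    refine le_trans hk (le_of_eq ?_)
    apply Finset.sum_congr rfl
    intro x _
    congr 1
    rw [Matrix.mulVec, dotProduct]
    apply Finset.sum_congr rfl
    intro i _
    ring
  have hswap : ∑ x : Fin (2^n) → Bool,
        l1norm (F.mulVec fun i => (if x i then 1 else -1) * ψ i)
      = ∑ j : Fin (2^n), ∑ x : Fin (2^n) → Bool,
          ‖(F.mulVec fun i => (if x i then 1 else -1) * ψ i) j‖ := by
    simp only [l1norm]
    rw [Finset.sum_comm]
  have htot : (2:ℝ)^(2^n : ℕ) * ((2:ℝ)^n * Real.sqrt (((2:ℝ)^n)⁻¹ / 2))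
      ≤ ∑ x : Fin (2^n) → Bool,
          l1norm (F.mulVec fun i => (if x i then 1 else -1) * ψ i) := by
    rw [hswap]
    calc (2:ℝ)^(2^n : ℕ) * ((2:ℝ)^n * Real.sqrt (((2:ℝ)^n)⁻¹ / 2))
        = ∑ _j : Fin (2^n), (2:ℝ)^(2^n : ℕ) * Real.sqrt (((2:ℝ)^n)⁻¹ / 2) := by
          rw [Finset.sum_const, Finset.card_univ, Fintype.card_fin, nsmul_eq_mul]
          push_cast
          ring
      _ ≤ _ := Finset.sum_le_sum (fun j _ => hkey j)
  have heq : (2:ℝ)^n * Real.sqrt (((2:ℝ)^n)⁻¹ / 2) = Real.sqrt (2^n) / Real.sqrt 2 := by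
    have hd : (((2:ℝ)^n)⁻¹ / 2) = ((2:ℝ)^n)⁻¹ * (2:ℝ)⁻¹ := by ring
    rw [hd, Real.sqrt_mul (by positivity), Real.sqrt_inv, Real.sqrt_inv]
    have hs : (0:ℝ) < Real.sqrt ((2:ℝ)^n) := Real.sqrt_pos.mpr h2npos
    have hs2 : (0:ℝ) < Real.sqrt 2 := by positivity
    rw [div_eq_mul_inv]
    have hms : Real.sqrt ((2:ℝ)^n) * Real.sqrt ((2:ℝ)^n) = (2:ℝ)^n :=
      Real.mul_self_sqrt (le_of_lt h2npos)
    field_simp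
    nlinarith [hms]
  have hP : (0:ℝ) < (2:ℝ)^(2^n : ℕ) := by positivity
  rw [div_mul_eq_mul_div, le_div_iff₀ hP, one_mul] at *
  calc Real.sqrt (2^n) / Real.sqrt 2 * (2:ℝ)^(2^n : ℕ)
      = (2:ℝ)^(2^n : ℕ) * ((2:ℝ)^n * Real.sqrt (((2:ℝ)^n)⁻¹ / 2)) := by
        rw [heq]; ring
    _ ≤ _ := htot
end
end

section
/- Let n ≥ 1 be an integer and α ∈ (0, 1] a real number, and suppose U is a function assigning to every unit vector φ ∈ ℂ^(2^n) a 2^n × 2^n unitary matrix U_φ satisfying Re⟨φ, U_φ·e_0⟩ ≥ α, where e_0 is the standard basis vector indexed by the all-zeros string and ⟨u, v⟩ = Σ_x conj(u_x)·v_x. Define γ = min(α, 1/√2) and β = √(1 − γ²). Then for every unit vector ψ ∈ ℂ^(2^n) and every integer T ≥ 1, there exist a real number ζ with γ·(1 − β) ≤ ζ ≤ γ and unit vectors ψ_0, ψ_1, …, ψ_{T−1} ∈ ℂ^(2^n) such that ‖ψ − ζ·Σ_{k=0}^{T−1} β^k · U_{ψ_k}·e_0‖₂ ≤ (γ/(1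 − β))·β^{T/2}. -/
open scoped BigOperators
open scoped Matrix

noncomputable section

lemma my_l2norm_nonneg {N : ℕ} (v : Fin N → ℂ) : 0 ≤ l2norm v := Real.sqrt_nonneg _

lemma my_l2norm_sq {N : ℕ} (v : Fin N → ℂ) : l2norm v ^ 2 = ∑ i, Complex.normSq (v i) :=
  Real.sq_sqrt (Finset.sum_nonneg fun i _ => Complex.normSq_nonneg _)

lemma my_l2norm_eq_zero {N : ℕ} {v : Fin N → ℂ} (h : l2norm v = 0) : v = 0 := by
  have h2 : (∑ i, Complex.normSq (v i)) = 0 := by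
    have := my_l2norm_sq v; rw [h] at this; linarith
  funext i
  have := (Finset.sum_eq_zero_iff_of_nonneg (fun i _ => Complex.normSq_nonneg (v i))).mp h2 i (Finset.mem_univ i)
  simpa [Complex.normSq_eq_zero] using this

lemma my_l2norm_smul {N : ℕ} (r : ℝ) (v : Fin N → ℂ) :
    l2norm ((r : ℂ) • v) = |r| * l2norm v := by
  unfold l2norm
  rw [← Real.sqrt_mul_self_eq_abs, ← Real.sqrt_mul (mul_self_nonneg r), Finset.mul_sum]
  congr 1; apply Finset.sum_congr rfl; intro i _
  simp [Complex.normSq_mul, Complex.normSq_ofReal]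

lemma my_l2norm_e0 (k : ℕ) : l2norm (e0 k) = 1 := by
  unfold l2norm e0
  have : ∀ i : Fin (2 ^ k), Complex.normSq (if (i : ℕ) = 0 then (1:ℂ) else 0)
      = if i = (⟨0, pow_pos (by norm_num) k⟩ : Fin (2 ^ k)) then 1 else 0 := by
    intro i
    by_cases h : (i : ℕ) = 0 <;> simp [h, Fin.ext_iff]
  rw [Finset.sum_congr rfl fun i _ => this i, Finset.sum_ite_eq' _ _ (fun _ => (1:ℝ))]
  simp

lemma my_cInner_self_re {N : ℕ} (v : Fin N → ℂ) :
    (cInner v v).re = ∑ i, Complex.normSq (v i) := by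
  unfold cInner
  rw [Complex.re_sum]
  apply Finset.sum_congr rfl; intro i _
  simp [Complex.normSq_apply, Complex.mul_re]

lemma my_cInner_smul_left {N : ℕ} (r : ℝ) (u v : Fin N → ℂ) :
    cInner ((r : ℂ) • u) v = (r : ℂ) * cInner u v := by
  unfold cInner
  rw [Finset.mul_sum]
  apply Finset.sum_congr rfl; intro i _
  simp [Complex.conj_ofReal]; ring

lemma my_expand {N : ℕ} (s u : Fin N → ℂ) (c : ℝ) :
    l2norm (s - (c : ℂ) • u) ^ 2
      = l2norm s ^ 2 - 2 * c * (cInner s u).re + c ^ 2 * l2norm u ^ 2 := by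
  simp only [my_l2norm_sq]
  have key : ∀ i, Complex.normSq (s i - (c : ℂ) * u i)
      = Complex.normSq (s i) - 2 * c * ((starRingEnd ℂ) (s i) * u i).re
        + c ^ 2 * Complex.normSq (u i) := by
    intro i
    simp [Complex.normSq_apply, Complex.mul_re, Complex.sub_re, Complex.sub_im,
      Complex.mul_im]
    ring
  have : (∑ i, Complex.normSq ((s - (c : ℂ) • u) i))
      = ∑ i, (Complex.normSq (s i) - 2 * c * ((starRingEnd ℂ) (s i) * u i).re
        + c ^ 2 * Complex.normSq (u i)) := by
    apply Finset.sum_congr rfl; intro i _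
    simpa using key i
  rw [this, Finset.sum_add_distrib, Finset.sum_sub_distrib, ← Finset.mul_sum, ← Finset.mul_sum]
  unfold cInner
  rw [Complex.re_sum]

lemma my_unitary_l2norm {N : ℕ} {A : Matrix (Fin N) (Fin N) ℂ}
    (hA : A ∈ Matrix.unitaryGroup (Fin N) ℂ) (v : Fin N → ℂ) :
    l2norm (A.mulVec v) = l2norm v := by
  have h1 : Aᴴ * A = 1 := by
    have := hA.1
    rwa [Matrix.star_eq_conjTranspose] at this
  have h2 : cInner (A.mulVec v) (A.mulVec v) = cInner v v := by
    have hd : ∀ (u w : Fin N → ℂ), cInner u w = dotProduct (star u) w := by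
      intro u w; unfold cInner; rfl
    rw [hd, hd, Matrix.star_mulVec, Matrix.dotProduct_mulVec, Matrix.vecMul_vecMul, h1,
      Matrix.vecMul_one]
  unfold l2norm
  rw [← my_cInner_self_re, ← my_cInner_self_re, h2]

/-- Normalize `v`, with fallback `w` when `v = 0`. -/
def myNrmz {N : ℕ} (w v : Fin N → ℂ) : Fin N → ℂ :=
  if l2norm v = 0 then w else ((l2norm v : ℝ) : ℂ)⁻¹ • v

lemma my_l2norm_nrmz {N : ℕ} {w : Fin N → ℂ} (hw : l2norm w = 1) (v : Fin N → ℂ) :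
    l2norm (myNrmz w v) = 1 := by
  unfold myNrmz
  by_cases h : l2norm v = 0
  · simp [h, hw]
  · rw [if_neg h]
    have hpos : 0 < l2norm v := lt_of_le_of_ne (my_l2norm_nonneg v) (Ne.symm h)
    rw [show ((l2norm v : ℝ) : ℂ)⁻¹ = (((l2norm v)⁻¹ : ℝ) : ℂ) by push_cast; ring,
      my_l2norm_smul, abs_of_pos (inv_pos.2 hpos)]
    field_simp

/-- The residual sequence. -/
def mySseq {n : ℕ} (U : (Fin (2 ^ n) → ℂ) → Matrix (Fin (2 ^ n)) (Fin (2 ^ n)) ℂ)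
    (γ β : ℝ) (ψ : Fin (2 ^ n) → ℂ) : ℕ → (Fin (2 ^ n) → ℂ)
  | 0 => ψ
  | k + 1 => mySseq U γ β ψ k -
      ((γ * β ^ k : ℝ) : ℂ) • (U (myNrmz (e0 n) (mySseq U γ β ψ k))).mulVec (e0 n)

lemma mySseq_eq {n : ℕ} (U : (Fin (2 ^ n) → ℂ) → Matrix (Fin (2 ^ n)) (Fin (2 ^ n)) ℂ)
    (γ β : ℝ) (ψ : Fin (2 ^ n) → ℂ) (k : ℕ) :
    mySseq U γ β ψ k = ψ - (γ : ℂ) • ∑ j ∈ Finset.range k,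
      ((β : ℂ) ^ j) • (U (myNrmz (e0 n) (mySseq U γ β ψ j))).mulVec (e0 n) := by
  induction k with
  | zero => simp [mySseq]
  | succ k ih =>
    rw [mySseq, Finset.sum_range_succ, smul_add, sub_add_eq_sub_sub, ← ih, smul_smul]
    congr 1
    rw [show ((γ * β ^ k : ℝ) : ℂ) = (γ : ℂ) * (β : ℂ) ^ k by push_cast; ring]

set_option maxHeartbeats 1000000 in
/-- Lemma 9: iteratively reducing the approximation error. -/
theorem approx_coeff (n : ℕ) (hn : 1 ≤ n) (α : ℝ) (hα0 : 0 < α) (hα1 : α ≤ 1)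
    (U : (Fin (2 ^ n) → ℂ) → Matrix (Fin (2 ^ n)) (Fin (2 ^ n)) ℂ)
    (hU : ∀ φ : Fin (2 ^ n) → ℂ, l2norm φ = 1 →
      U φ ∈ Matrix.unitaryGroup (Fin (2 ^ n)) ℂ ∧
        α ≤ (cInner φ ((U φ).mulVec (e0 n))).re)
    (γ β : ℝ) (hγ : γ = min α (Real.sqrt 2)⁻¹) (hβ : β = Real.sqrt (1 - γ ^ 2)) :
    ∀ ψ : Fin (2 ^ n) → ℂ, l2norm ψ = 1 → ∀ T : ℕ, 1 ≤ T →
      ∃ (ζ : ℝ) (ψs : Fin T → Fin (2 ^ n) → ℂ),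
        γ * (1 - β) ≤ ζ ∧ ζ ≤ γ ∧
        (∀ k, l2norm (ψs k) = 1) ∧
        l2norm (ψ - (ζ : ℂ) •
            ∑ k : Fin T, ((β : ℂ) ^ (k : ℕ)) • (U (ψs k)).mulVec (e0 n))
          ≤ γ / (1 - β) * β ^ ((T : ℝ) / 2) := by
  intro ψ hψ T hT
  have hsqrt2 : (1:ℝ) ≤ Real.sqrt 2 := by
    nlinarith [Real.sq_sqrt (by norm_num : (2:ℝ) ≥ 0), Real.sqrt_nonneg 2]
  have hγα : γ ≤ α := hγ ▸ min_le_left _ _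
  have hγpos : 0 < γ := by
    rw [hγ]; exact lt_min hα0 (by positivity)
  have hγle : γ ≤ (Real.sqrt 2)⁻¹ := hγ ▸ min_le_right _ _
  have hγ2 : γ ^ 2 ≤ 1 / 2 := by
    have h2 : ((Real.sqrt 2)⁻¹) ^ 2 = 1 / 2 := by
      rw [inv_pow, Real.sq_sqrt (by norm_num : (0:ℝ) ≤ 2)]; norm_num
    nlinarith [hγle, hγpos]
  have hγ1 : γ ≤ 1 := le_trans hγα hα1
  have hβsq : β ^ 2 = 1 - γ ^ 2 := by
    rw [hβ, Real.sq_sqrt]; nlinarith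
  have hβ0 : 0 ≤ β := hβ ▸ Real.sqrt_nonneg _
  have hβpos : 0 < β := by nlinarith
  have hβlt1 : β < 1 := by nlinarith
  have h1β : 0 < 1 - β := by linarith
  have hγβ : 1 - β ≤ γ := by nlinarith
  -- invariant
  have inv : ∀ k, l2norm (mySseq U γ β ψ k) ≤ β ^ k := by
    intro k
    induction k with
    | zero => simpa [mySseq] using le_of_eq hψ
    | succ k ih =>
      set s := mySseq U γ β ψ k with hs
      set φ := myNrmz (e0 n) s with hφ
      set u := (U φ).mulVec (e0 n) with hu
      have hφ1 : l2norm φ = 1 := my_l2norm_nrmz (my_l2norm_e0 n) s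
      have hu1 : l2norm u = 1 := by
        rw [hu, my_unitary_l2norm (hU φ hφ1).1, my_l2norm_e0]
      have hρ0 : 0 ≤ l2norm s := my_l2norm_nonneg s
      have hre : γ * l2norm s ≤ (cInner s u).re := by
        by_cases h0 : l2norm s = 0
        · rw [h0, mul_zero]
          rw [my_l2norm_eq_zero h0]
          simp [cInner]
        · have hρpos : 0 < l2norm s := lt_of_le_of_ne hρ0 (Ne.symm h0)
          have hφd : φ = (((l2norm s)⁻¹ : ℝ) : ℂ) • s := by
            rw [hφ]; unfold myNrmz; rw [if_neg h0]; push_cast; ring_nf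
          have hci : cInner φ u = (((l2norm s)⁻¹ : ℝ) : ℂ) * cInner s u := by
            conv_lhs => rw [hφd]
            exact my_cInner_smul_left _ s u
          have halpha := (hU φ hφ1).2
          rw [← hu, hci] at halpha
          have hre' : ((((l2norm s)⁻¹ : ℝ) : ℂ) * cInner s u).re
              = (l2norm s)⁻¹ * (cInner s u).re := by
            simp [Complex.mul_re]
          rw [hre'] at halpha
          have hmul := mul_le_mul_of_nonneg_left halpha (le_of_lt hρpos)
          rw [← mul_assoc, mul_inv_cancel₀ h0, one_mul] at hmul
          nlinarith [hmul]
      have hstep : mySseq U γ β ψ (k+1) = s - ((γ * β ^ k : ℝ) : ℂ) • u := rfl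
      have hsq : l2norm (mySseq U γ β ψ (k+1)) ^ 2 ≤ (β ^ (k+1)) ^ 2 := by
        rw [hstep, my_expand, hu1]
        have hBk : (0:ℝ) ≤ β ^ k := pow_nonneg hβ0 k
        have hkey : (β ^ k - l2norm s) * (l2norm s + (1 - 2 * γ ^ 2) * β ^ k) ≥ 0 := by
          apply mul_nonneg
          · linarith [ih]
          · nlinarith
        have hpow2 : (β ^ (k+1)) ^ 2 = (1 - γ ^ 2) * (β ^ k) ^ 2 := by
          rw [show (β ^ (k+1)) ^ 2 = β ^ 2 * (β ^ k) ^ 2 from by ring, hβsq]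
        nlinarith [hkey, mul_nonneg (mul_nonneg hγpos.le hBk) (sub_nonneg.2 hre), hpow2]
      have h1 := Real.sqrt_le_sqrt hsq
      rwa [Real.sqrt_sq (my_l2norm_nonneg _), Real.sqrt_sq (pow_nonneg hβ0 (k+1))] at h1
  refine ⟨γ, fun k => myNrmz (e0 n) (mySseq U γ β ψ (k : ℕ)), ?_, le_refl γ, ?_, ?_⟩
  · nlinarith
  · intro k; exact my_l2norm_nrmz (my_l2norm_e0 n) _
  · have hsum : (∑ k : Fin T, ((β : ℂ) ^ (k : ℕ)) •
        (U (myNrmz (e0 n) (mySseq U γ β ψ (k : ℕ)))).mulVec (e0 n))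
        = ∑ j ∈ Finset.range T,
          ((β : ℂ) ^ j) • (U (myNrmz (e0 n) (mySseq U γ β ψ j))).mulVec (e0 n) :=
      Fin.sum_univ_eq_sum_range
        (fun j => ((β : ℂ) ^ j) • (U (myNrmz (e0 n) (mySseq U γ β ψ j))).mulVec (e0 n)) T
    rw [hsum, ← mySseq_eq U γ β ψ T]
    refine le_trans (inv T) ?_
    have hhalf : β ^ ((T : ℝ) / 2) ≤ 1 := Real.rpow_le_one hβ0 hβlt1.le (by positivity)
    have hrpos : 0 < β ^ ((T : ℝ) / 2) := Real.rpow_pos_of_pos hβpos _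
    have hT2 : (β : ℝ) ^ T = β ^ ((T : ℝ) / 2) * β ^ ((T : ℝ) / 2) := by
      rw [← Real.rpow_add hβpos,
        show (T : ℝ) / 2 + (T : ℝ) / 2 = ((T : ℕ) : ℝ) by push_cast; ring,
        Real.rpow_natCast]
    have hM : 1 ≤ γ / (1 - β) := (one_le_div h1β).2 hγβ
    calc (β : ℝ) ^ T = β ^ ((T : ℝ) / 2) * β ^ ((T : ℝ) / 2) := hT2
      _ ≤ 1 * β ^ ((T : ℝ) / 2) := by nlinarith
      _ ≤ γ / (1 - β) * β ^ ((T : ℝ) / 2) := by nlinarith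
end
end

section
/- Let n ≥ 1 be an integer and let ψ ∈ ℂ^(2^n) be a unit vector all of whose coordinates are real. Then for every integer T ≥ 1, there exist a real number ζ with (√2 − 1)/2 ≤ ζ ≤ 1/√2 and unit vectors ψ_0, ψ_1, …, ψ_{T−1} ∈ ℂ^(2^n) such that ‖ψ − ζ·Σ_{k=0}^{T−1} 2^{−k/2}·ψ_k‖₂ ≤ (1/(√2 − 1))·2^{−T/4}, where each ψ_k has the form ψ_k = B_2^{(k)} · H^{⊗n} · B_1^{(k)} · H^{⊗n} · e_0^{(n)} for some Boolean phase oracles B_1^{(k)} and B_2^{(k)} on n qubits. -/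
open scoped BigOperators
open scoped Matrix

noncomputable section

set_option linter.unusedSectionVars false
set_option linter.unusedVariables false
set_option linter.unreachableTactic false
set_option linter.unusedTactic false
set_option linter.unnecessarySeqFocus false
set_option maxHeartbeats 1000000

open Finset in
section
namespace QAux



/-! ### Signs and Walsh characters on the Boolean cube -/

def sg (b : Bool) : ℝ := if b = true then -1 else 1

lemma sg_not (b : Bool) : sg (!b) = - sg b := by cases b <;> norm_num [sg]

lemma sg_sq (b : Bool) : sg b ^ 2 = 1 := by cases b <;> norm_num [sg]

variable {ι : Type*} [Fintype ι] [DecidableEq ι]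

def wal (w x : ι → Bool) : ℝ := ∏ i, if w i = true ∧ x i = true then -1 else 1

lemma wal_comm (w x : ι → Bool) : wal w x = wal x w :=
  Finset.prod_congr rfl fun i _ => if_congr and_comm rfl rfl

lemma sum_wal_mul (w v : ι → Bool) :
    ∑ x : ι → Bool, wal w x * wal v x = if w = v then (2:ℝ) ^ Fintype.card ι else 0 := by
  have h1 : ∀ x : ι → Bool, wal w x * wal v x
      = ∏ i, ((if w i = true ∧ x i = true then (-1:ℝ) else 1) *
              (if v i = true ∧ x i = true then (-1:ℝ) else 1)) := fun x => by
    rw [wal, wal, ← Finset.prod_mul_distrib]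
  simp only [h1]
  rw [← Fintype.prod_sum fun i (b : Bool) =>
      ((if w i = true ∧ b = true then (-1:ℝ) else 1) *
       (if v i = true ∧ b = true then (-1:ℝ) else 1))]
  have h2 : ∀ i, (∑ b : Bool, ((if w i = true ∧ b = true then (-1:ℝ) else 1) *
      (if v i = true ∧ b = true then (-1:ℝ) else 1)))
      = if w i = v i then 2 else 0 := by
    intro i; rw [Fintype.sum_bool]
    cases hw : w i <;> cases hv : v i <;> norm_num
  rw [Finset.prod_congr rfl fun i _ => h2 i]
  by_cases h : w = v
  · subst h
    rw [if_pos rfl, Finset.prod_congr rfl fun i (_ : i ∈ univ) => if_pos rfl,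
      Finset.prod_const, Finset.card_univ]
  · rw [if_neg h]
    obtain ⟨i, hi⟩ : ∃ i, ¬ (w i = v i) := by
      by_contra hc; push_neg at hc; exact h (funext hc)
    exact Finset.prod_eq_zero (Finset.mem_univ i) (if_neg hi)

lemma parseval (h : (ι → Bool) → ℝ) :
    ∑ w : ι → Bool, (∑ x, h x * wal w x) ^ 2
      = (2:ℝ) ^ Fintype.card ι * ∑ x, (h x) ^ 2 := by
  have e1 : ∀ w : ι → Bool, (∑ x, h x * wal w x) ^ 2
      = ∑ x, ∑ y, (h x * h y) * (wal x w * wal y w) := by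
    intro w
    rw [sq, Finset.sum_mul_sum]
    refine Finset.sum_congr rfl fun x _ => Finset.sum_congr rfl fun y _ => ?_
    rw [wal_comm w x, wal_comm w y]; ring
  simp only [e1]
  rw [Finset.sum_comm]
  have e2 : ∀ x : ι → Bool, (∑ w : ι → Bool, ∑ y : ι → Bool, (h x * h y) * (wal x w * wal y w))
      = ∑ y : ι → Bool, ∑ w : ι → Bool, (h x * h y) * (wal x w * wal y w) :=
    fun _ => Finset.sum_comm
  simp only [e2]
  have e3 : ∀ x y : ι → Bool, (∑ w : ι → Bool, (h x * h y) * (wal x w * wal y w))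
      = (h x * h y) * (if x = y then (2:ℝ) ^ Fintype.card ι else 0) := fun x y => by
    rw [← Finset.mul_sum, sum_wal_mul]
  simp only [e3]
  have e4 : ∀ x : ι → Bool, (∑ y : ι → Bool, (h x * h y) * (if x = y then (2:ℝ) ^ Fintype.card ι else 0))
      = h x ^ 2 * (2:ℝ) ^ Fintype.card ι := by
    intro x
    rw [Finset.sum_eq_single x]
    · rw [if_pos rfl]; ring
    · intro y _ hy; rw [if_neg fun hh => hy hh.symm]; ring
    · exact fun hx => absurd (Finset.mem_univ x) hx
  simp only [e4]
  rw [← Finset.sum_mul]; ring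

lemma sum_sg_mul (i j : ι) :
    ∑ x : ι → Bool, sg (x i) * sg (x j) = if i = j then (2:ℝ) ^ Fintype.card ι else 0 := by
  have hs : ∀ (x : ι → Bool) (k : ι), sg (x k) = wal (fun t => decide (t = k)) x := by
    intro x k
    rw [wal, Finset.prod_eq_single k]
    · simp [sg]
    · intro b _ hb; simp [hb]
    · exact fun h => absurd (Finset.mem_univ k) h
  simp only [hs]
  rw [sum_wal_mul]
  by_cases h : i = j
  · subst h; rw [if_pos rfl, if_pos rfl]
  · rw [if_neg h, if_neg ?_]
    intro he
    have h2 := congrFun he i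
    simp at h2
    exact h h2


lemma sum_linear_sq (a : ι → ℝ) :
    ∑ x : ι → Bool, (∑ i, a i * sg (x i)) ^ 2
      = (2:ℝ) ^ Fintype.card ι * ∑ i, (a i) ^ 2 := by
  have e1 : ∀ x : ι → Bool, (∑ i, a i * sg (x i)) ^ 2
      = ∑ i, ∑ j, (a i * a j) * (sg (x i) * sg (x j)) := by
    intro x; rw [sq, Finset.sum_mul_sum]
    exact Finset.sum_congr rfl fun i _ => Finset.sum_congr rfl fun j _ => by ring
  simp only [e1]
  rw [Finset.sum_comm]
  have e2 : ∀ i, (∑ x : ι → Bool, ∑ j, (a i * a j) * (sg (x i) * sg (x j)))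
      = ∑ j, ∑ x : ι → Bool, (a i * a j) * (sg (x i) * sg (x j)) := fun _ => Finset.sum_comm
  simp only [e2]
  have e3 : ∀ i j, (∑ x : ι → Bool, (a i * a j) * (sg (x i) * sg (x j)))
      = (a i * a j) * (if i = j then (2:ℝ) ^ Fintype.card ι else 0) := fun i j => by
    rw [← Finset.mul_sum, sum_sg_mul]
  simp only [e3]
  have e4 : ∀ i, (∑ j, (a i * a j) * (if i = j then (2:ℝ) ^ Fintype.card ι else 0))
      = a i ^ 2 * (2:ℝ) ^ Fintype.card ι := by
    intro i; rw [Finset.sum_eq_single i]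
    · rw [if_pos rfl]; ring
    · intro j _ hj; rw [if_neg fun hh => hj hh.symm]; ring
    · exact fun hx => absurd (Finset.mem_univ i) hx
  simp only [e4]
  rw [← Finset.sum_mul]; ring

/-! ### Khintchine inequality, following Latała–Oleszkiewicz -/

def kf (a : ι → ℝ) (x : ι → Bool) : ℝ := |∑ i, a i * sg (x i)|

lemma kf_nonneg (a : ι → ℝ) (x : ι → Bool) : 0 ≤ kf a x := abs_nonneg _

def flip (i : ι) (x : ι → Bool) : ι → Bool := Function.update x i (!x i)

lemma flip_invol (i : ι) : Function.Involutive (flip i) := by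
  intro x; funext j
  by_cases h : j = i
  · subst h; simp [flip, Function.update_apply]
  · simp [flip, Function.update_apply, h]

lemma sum_flip (i : ι) (F : (ι → Bool) → ℝ) :
    ∑ x : ι → Bool, F (flip i x) = ∑ x : ι → Bool, F x :=
  Fintype.sum_equiv (Function.Involutive.toPerm _ (flip_invol i)) _ _ (fun _ => rfl)

lemma sum_notc (F : (ι → Bool) → ℝ) :
    ∑ x : ι → Bool, F (fun j => !x j) = ∑ x : ι → Bool, F x := by
  have hinv : Function.Involutive (fun (x : ι → Bool) (j : ι) => !x j) := by
    intro x; funext j; simp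
  exact Fintype.sum_equiv (Function.Involutive.toPerm _ hinv) _ _ (fun _ => rfl)

lemma sum_sg_flip (a : ι → ℝ) (i : ι) (x : ι → Bool) :
    ∑ j, a j * sg (flip i x j) = (∑ j, a j * sg (x j)) - 2 * (a i * sg (x i)) := by
  have hfun : (fun j => a j * sg (flip i x j))
      = Function.update (fun j => a j * sg (x j)) i (a i * sg (!x i)) := by
    funext j
    by_cases h : j = i
    · subst h; simp [flip, Function.update_apply]
    · simp [flip, Function.update_apply, h]
  calc ∑ j, a j * sg (flip i x j)
      = ∑ j, Function.update (fun j => a j * sg (x j)) i (a i * sg (!x i)) j := by rw [hfun]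
    _ = a i * sg (!x i) + ∑ j ∈ univ \ {i}, a j * sg (x j) :=
        Finset.sum_update_of_mem (Finset.mem_univ i) _ _
    _ = (∑ j, a j * sg (x j)) - 2 * (a i * sg (x i)) := by
        rw [sg_not]
        have := Finset.sum_eq_sum_sdiff_singleton_add (Finset.mem_univ i)
          (fun j => a j * sg (x j))
        rw [this]; ring

lemma kf_flip_bound (a : ι → ℝ) (x : ι → Bool) :
    ((Fintype.card ι : ℝ) - 2) * kf a x ≤ ∑ i, kf a (flip i x) := by
  have h2 : ∀ i, kf a (flip i x) = |(∑ j, a j * sg (x j)) - 2 * (a i * sg (x i))| := fun i => by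
    rw [kf, sum_sg_flip]
  have h1 : ∑ i, ((∑ j, a j * sg (x j)) - 2 * (a i * sg (x i)))
      = ((Fintype.card ι : ℝ) - 2) * (∑ j, a j * sg (x j)) := by
    rw [Finset.sum_sub_distrib, Finset.sum_const, Finset.card_univ, nsmul_eq_mul]
    have h3 : ∑ i, 2 * (a i * sg (x i)) = 2 * ∑ j, a j * sg (x j) := by
      rw [← Finset.mul_sum]
    rw [h3]; ring
  calc ((Fintype.card ι : ℝ) - 2) * kf a x
      ≤ |((Fintype.card ι : ℝ) - 2)| * kf a x := by
        exact mul_le_mul_of_nonneg_right (le_abs_self _) (kf_nonneg a x)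
    _ = |((Fintype.card ι : ℝ) - 2) * (∑ j, a j * sg (x j))| := by rw [abs_mul, kf]
    _ = |∑ i, ((∑ j, a j * sg (x j)) - 2 * (a i * sg (x i)))| := by rw [h1]
    _ ≤ ∑ i, |(∑ j, a j * sg (x j)) - 2 * (a i * sg (x i))| := Finset.abs_sum_le_sum_abs _ _
    _ = ∑ i, kf a (flip i x) := by
        exact (Finset.sum_congr rfl fun i _ => (h2 i).symm)

lemma Qbound (a : ι → ℝ) :
    ((Fintype.card ι : ℝ) - 2) * (∑ x : ι → Bool, kf a x ^ 2)
      ≤ ∑ i, ∑ x : ι → Bool, kf a x * kf a (flip i x) := by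
  have h : ∀ x : ι → Bool, ((Fintype.card ι : ℝ) - 2) * kf a x ^ 2
      ≤ ∑ i, kf a x * kf a (flip i x) := by
    intro x
    have h0 := mul_le_mul_of_nonneg_left (kf_flip_bound a x) (kf_nonneg a x)
    calc ((Fintype.card ι : ℝ) - 2) * kf a x ^ 2
        = kf a x * (((Fintype.card ι : ℝ) - 2) * kf a x) := by ring
      _ ≤ kf a x * ∑ i, kf a (flip i x) := h0
      _ = ∑ i, kf a x * kf a (flip i x) := Finset.mul_sum _ _ _
  calc ((Fintype.card ι : ℝ) - 2) * (∑ x : ι → Bool, kf a x ^ 2)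
      = ∑ x : ι → Bool, ((Fintype.card ι : ℝ) - 2) * kf a x ^ 2 := Finset.mul_sum _ _ _
    _ ≤ ∑ x : ι → Bool, ∑ i, kf a x * kf a (flip i x) :=
        Finset.sum_le_sum fun x _ => h x
    _ = ∑ i, ∑ x : ι → Bool, kf a x * kf a (flip i x) := Finset.sum_comm

lemma wal_flip (w : ι → Bool) (i : ι) (x : ι → Bool) :
    wal w (flip i x) = (if w i = true then (-1:ℝ) else 1) * wal w x := by
  have hfun : (fun j => if w j = true ∧ flip i x j = true then (-1:ℝ) else 1)
      = Function.update (fun j => if w j = true ∧ x j = true then (-1:ℝ) else 1) i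
          (if w i = true ∧ (!x i) = true then (-1:ℝ) else 1) := by
    funext j
    by_cases h : j = i
    · subst h; simp [flip, Function.update_apply]
    · simp [flip, Function.update_apply, h]
  calc wal w (flip i x)
      = ∏ j, Function.update (fun j => if w j = true ∧ x j = true then (-1:ℝ) else 1) i
          (if w i = true ∧ (!x i) = true then (-1:ℝ) else 1) j := by
        simp only [wal]; rw [hfun]
    _ = (if w i = true ∧ (!x i) = true then (-1:ℝ) else 1) *
          ∏ j ∈ univ \ {i}, (if w j = true ∧ x j = true then (-1:ℝ) else 1) :=
        Finset.prod_update_of_mem (Finset.mem_univ i) _ _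
    _ = (if w i = true then (-1:ℝ) else 1) * wal w x := by
        simp only [wal]
        rw [Finset.prod_eq_mul_prod_sdiff_singleton_of_mem (Finset.mem_univ i)
          (fun j => if w j = true ∧ x j = true then (-1:ℝ) else 1)]
        cases hw : w i <;> cases hx : x i <;> simp <;> ring

lemma sum_sub_flip_wal (a : ι → ℝ) (i : ι) (w : ι → Bool) :
    ∑ x : ι → Bool, (kf a x - kf a (flip i x)) * wal w x
      = if w i = true then 2 * (∑ x : ι → Bool, kf a x * wal w x) else 0 := by
  have h1 : ∑ x : ι → Bool, kf a (flip i x) * wal w x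
      = (if w i = true then (-1:ℝ) else 1) * ∑ x : ι → Bool, kf a x * wal w x := by
    have h0 := sum_flip i (fun x => kf a (flip i x) * wal w x)
    rw [← h0]
    have h3 : ∀ x : ι → Bool, kf a (flip i (flip i x)) * wal w (flip i x)
        = (if w i = true then (-1:ℝ) else 1) * (kf a x * wal w x) := by
      intro x; rw [flip_invol i x, wal_flip]; ring
    rw [Finset.sum_congr rfl fun x _ => h3 x, ← Finset.mul_sum]
  have h4 : ∀ x : ι → Bool, (kf a x - kf a (flip i x)) * wal w x
      = kf a x * wal w x - kf a (flip i x) * wal w x := fun x => by ring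
  rw [Finset.sum_congr rfl fun x _ => h4 x, Finset.sum_sub_distrib, h1]
  cases hw : w i <;> simp <;> ring

lemma weighted_parseval_bound (a : ι → ℝ) :
    ∑ w : ι → Bool, ((univ.filter (fun i => w i = true)).card : ℝ)
        * (∑ x : ι → Bool, kf a x * wal w x) ^ 2
      ≤ (2:ℝ) ^ Fintype.card ι * ∑ x : ι → Bool, kf a x ^ 2 := by
  classical
  set S := ∑ x : ι → Bool, kf a x ^ 2 with hS
  set F : (ι → Bool) → ℝ := fun w => ∑ x : ι → Bool, kf a x * wal w x with hF
  have key : ∀ i : ι, ∑ w : ι → Bool, (if w i = true then (4:ℝ) * F w ^ 2 else 0)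
      = (2:ℝ) ^ Fintype.card ι *
        (2 * S - 2 * ∑ x : ι → Bool, kf a x * kf a (flip i x)) := by
    intro i
    have hpars := parseval (fun x => kf a x - kf a (flip i x))
    have h2 : ∀ w : ι → Bool, (∑ x : ι → Bool, (kf a x - kf a (flip i x)) * wal w x) ^ 2
        = if w i = true then (4:ℝ) * F w ^ 2 else 0 := by
      intro w; rw [sum_sub_flip_wal]
      cases hw : w i <;> simp [hF] <;> ring
    have hfl : ∑ x : ι → Bool, kf a (flip i x) ^ 2 = S := sum_flip i (fun x => kf a x ^ 2)
    have h3 : ∑ x : ι → Bool, (kf a x - kf a (flip i x)) ^ 2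
        = 2 * S - 2 * ∑ x : ι → Bool, kf a x * kf a (flip i x) := by
      have e : ∀ x : ι → Bool, (kf a x - kf a (flip i x)) ^ 2
          = kf a x ^ 2 + kf a (flip i x) ^ 2 - 2 * (kf a x * kf a (flip i x)) := fun x => by ring
      rw [Finset.sum_congr rfl fun x _ => e x, Finset.sum_sub_distrib,
        Finset.sum_add_distrib, hfl, ← Finset.mul_sum, hS]
      ring
    calc ∑ w : ι → Bool, (if w i = true then (4:ℝ) * F w ^ 2 else 0)
        = ∑ w : ι → Bool, (∑ x : ι → Bool, (kf a x - kf a (flip i x)) * wal w x) ^ 2 :=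
          Finset.sum_congr rfl fun w _ => (h2 w).symm
      _ = (2:ℝ) ^ Fintype.card ι * ∑ x : ι → Bool, (kf a x - kf a (flip i x)) ^ 2 := hpars
      _ = _ := by rw [h3]
  have lhs_eq : ∑ i, ∑ w : ι → Bool, (if w i = true then (4:ℝ) * F w ^ 2 else 0)
      = ∑ w : ι → Bool, ((univ.filter (fun i => w i = true)).card : ℝ) * (4 * F w ^ 2) := by
    rw [Finset.sum_comm]
    refine Finset.sum_congr rfl fun w _ => ?_
    rw [← Finset.sum_filter, Finset.sum_const, nsmul_eq_mul]
  have rhs_le : ∑ i, ((2:ℝ) ^ Fintype.card ι *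
        (2 * S - 2 * ∑ x : ι → Bool, kf a x * kf a (flip i x)))
      ≤ (2:ℝ) ^ Fintype.card ι * (4 * S) := by
    rw [← Finset.mul_sum]
    have h2c : (0:ℝ) ≤ 2 ^ Fintype.card ι := by positivity
    have hQ := Qbound a
    have hsum : ∑ i, (2 * S - 2 * ∑ x : ι → Bool, kf a x * kf a (flip i x))
        = 2 * (Fintype.card ι : ℝ) * S
          - 2 * ∑ i, ∑ x : ι → Bool, kf a x * kf a (flip i x) := by
      rw [Finset.sum_sub_distrib, Finset.sum_const, Finset.card_univ, nsmul_eq_mul,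
        ← Finset.mul_sum]
      ring
    rw [hsum]
    have hlin : 2 * (Fintype.card ι : ℝ) * S
        - 2 * (∑ i, ∑ x : ι → Bool, kf a x * kf a (flip i x)) ≤ 4 * S := by nlinarith [hQ]
    exact mul_le_mul_of_nonneg_left hlin h2c
  have hch : ∑ w : ι → Bool, ((univ.filter (fun i => w i = true)).card : ℝ) * (4 * F w ^ 2)
      ≤ (2:ℝ) ^ Fintype.card ι * (4 * S) := by
    rw [← lhs_eq, Finset.sum_congr rfl fun i (_ : i ∈ univ) => key i]
    exact rhs_le
  have expand : ∑ w : ι → Bool, ((univ.filter (fun i => w i = true)).card : ℝ) * (4 * F w ^ 2)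
      = 4 * ∑ w : ι → Bool, ((univ.filter (fun i => w i = true)).card : ℝ) * F w ^ 2 := by
    rw [Finset.mul_sum]
    exact Finset.sum_congr rfl fun w _ => by ring
  rw [expand] at hch
  have hgoal : ∑ w : ι → Bool, ((univ.filter (fun i => w i = true)).card : ℝ) * F w ^ 2
      ≤ (2:ℝ) ^ Fintype.card ι * S := by linarith
  exact hgoal

lemma F_eq_zero_of_odd (a : ι → ℝ) (w : ι → Bool)
    (hodd : ¬ Even (univ.filter (fun i => w i = true)).card) :
    (∑ x : ι → Bool, kf a x * wal w x) = 0 := by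
  have hneg : ∀ x : ι → Bool, kf a (fun j => !x j) = kf a x := by
    intro x
    simp only [kf]
    have he : ∀ j, a j * sg (!x j) = -(a j * sg (x j)) := fun j => by rw [sg_not]; ring
    rw [Finset.sum_congr rfl fun j _ => he j, Finset.sum_neg_distrib, abs_neg]
  have hwal : ∀ x : ι → Bool, wal w (fun j => !x j) = (-1:ℝ) * wal w x := by
    intro x
    have h1 : wal w (fun j => !x j)
        = (∏ i, if w i = true then (-1:ℝ) else 1) * wal w x := by
      simp only [wal, ← Finset.prod_mul_distrib]
      refine Finset.prod_congr rfl fun i _ => ?_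
      by_cases hw : w i = true <;> by_cases hx : x i = true <;> simp [hw, hx]
    have h2 : (∏ i, if w i = true then (-1:ℝ) else 1)
        = (-1:ℝ) ^ (univ.filter (fun i => w i = true)).card := by
      rw [Finset.prod_ite, Finset.prod_const, Finset.prod_const, one_pow, mul_one]
    rw [h1, h2, (Nat.not_even_iff_odd.mp hodd).neg_one_pow]
  have h0 := sum_notc (fun x => kf a x * wal w x)
  have h1 : ∀ x : ι → Bool, kf a (fun j => !x j) * wal w (fun j => !x j)
      = (-1:ℝ) * (kf a x * wal w x) := by
    intro x; rw [hneg, hwal]; ring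
  rw [Finset.sum_congr rfl (fun x (_ : x ∈ univ) => h1 x), ← Finset.mul_sum] at h0
  linarith [h0]

theorem khintchine (a : ι → ℝ) :
    Real.sqrt (∑ i, a i ^ 2) * (2:ℝ) ^ Fintype.card ι
      ≤ Real.sqrt 2 * ∑ x : ι → Bool, |∑ i, a i * sg (x i)| := by
  classical
  set S := ∑ x : ι → Bool, kf a x ^ 2 with hS
  set F : (ι → Bool) → ℝ := fun w => ∑ x : ι → Bool, kf a x * wal w x with hF
  set w0 : ι → Bool := fun _ => false with hw0
  have hSval : S = (2:ℝ) ^ Fintype.card ι * ∑ i, a i ^ 2 := by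
    have he : ∀ x : ι → Bool, kf a x ^ 2 = (∑ i, a i * sg (x i)) ^ 2 := fun x => sq_abs _
    rw [hS, Finset.sum_congr rfl fun x _ => he x, sum_linear_sq]
  have hpars : ∑ w : ι → Bool, F w ^ 2 = (2:ℝ) ^ Fintype.card ι * S := parseval (kf a)
  have hsplit : ∑ w : ι → Bool, F w ^ 2 = F w0 ^ 2 + ∑ w ∈ univ.erase w0, F w ^ 2 :=
    (Finset.add_sum_erase univ _ (mem_univ w0)).symm
  have htail : ∀ w ∈ univ.erase w0,
      2 * F w ^ 2 ≤ ((univ.filter (fun i => w i = true)).card : ℝ) * F w ^ 2 := by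
    intro w hw
    by_cases hF0 : F w = 0
    · rw [hF0]; simp
    · have hwt_even : Even (univ.filter (fun i => w i = true)).card := by
        by_contra ho; exact hF0 (F_eq_zero_of_odd a w ho)
      have hwt_pos : 0 < (univ.filter (fun i => w i = true)).card := by
        rw [Finset.card_pos]
        have hne : w ≠ w0 := (Finset.mem_erase.mp hw).1
        by_contra hc
        rw [Finset.not_nonempty_iff_eq_empty, Finset.filter_eq_empty_iff] at hc
        exact hne (funext fun i => by
          have := hc (Finset.mem_univ i)
          simpa [hw0] using this)
      have h2le : 2 ≤ (univ.filter (fun i => w i = true)).card := by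
        rcases hwt_even with ⟨k, hk⟩; omega
      have h2le' : (2:ℝ) ≤ ((univ.filter (fun i => w i = true)).card : ℝ) := by
        exact_mod_cast h2le
      nlinarith [sq_nonneg (F w)]
  have hwtsum := weighted_parseval_bound a
  have htail2 : 2 * ∑ w ∈ univ.erase w0, F w ^ 2 ≤ (2:ℝ) ^ Fintype.card ι * S := by
    calc 2 * ∑ w ∈ univ.erase w0, F w ^ 2 = ∑ w ∈ univ.erase w0, 2 * F w ^ 2 :=
          Finset.mul_sum _ _ _
      _ ≤ ∑ w ∈ univ.erase w0, ((univ.filter (fun i => w i = true)).card : ℝ) * F w ^ 2 :=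
          Finset.sum_le_sum htail
      _ ≤ ∑ w : ι → Bool, ((univ.filter (fun i => w i = true)).card : ℝ) * F w ^ 2 :=
          Finset.sum_le_sum_of_subset_of_nonneg (Finset.erase_subset _ _)
            (fun w _ _ => by positivity)
      _ ≤ (2:ℝ) ^ Fintype.card ι * S := hwtsum
  have hmain : (2:ℝ) ^ Fintype.card ι * S ≤ 2 * F w0 ^ 2 := by linarith [hpars, hsplit, htail2]
  have hF0val : F w0 = ∑ x : ι → Bool, kf a x := by
    rw [hF]
    refine Finset.sum_congr rfl fun x _ => ?_
    have hw1 : wal w0 x = 1 := Finset.prod_eq_one fun i _ => by simp [hw0]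
    rw [hw1, mul_one]
  have hF0nonneg : 0 ≤ F w0 := hF0val ▸ Finset.sum_nonneg fun x _ => kf_nonneg a x
  have hsq : (Real.sqrt (∑ i, a i ^ 2) * (2:ℝ) ^ Fintype.card ι) ^ 2
      ≤ (Real.sqrt 2 * F w0) ^ 2 := by
    rw [mul_pow, mul_pow, Real.sq_sqrt (by positivity : (0:ℝ) ≤ ∑ i, a i ^ 2),
      Real.sq_sqrt (by norm_num : (0:ℝ) ≤ 2)]
    rw [hSval] at hmain
    nlinarith [hmain, pow_nonneg (by norm_num : (0:ℝ) ≤ 2) (Fintype.card ι)]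
  have h1 : 0 ≤ Real.sqrt (∑ i, a i ^ 2) * (2:ℝ) ^ Fintype.card ι := by positivity
  have h2 : 0 ≤ Real.sqrt 2 * F w0 := mul_nonneg (Real.sqrt_nonneg 2) hF0nonneg
  calc Real.sqrt (∑ i, a i ^ 2) * (2:ℝ) ^ Fintype.card ι
      = Real.sqrt ((Real.sqrt (∑ i, a i ^ 2) * (2:ℝ) ^ Fintype.card ι) ^ 2) :=
        (Real.sqrt_sq h1).symm
    _ ≤ Real.sqrt ((Real.sqrt 2 * F w0) ^ 2) := Real.sqrt_le_sqrt hsq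
    _ = Real.sqrt 2 * F w0 := Real.sqrt_sq h2
    _ = Real.sqrt 2 * ∑ x : ι → Bool, |∑ i, a i * sg (x i)| := by
        rw [hF0val]; rfl


/-! ### Hadamard characters on `Fin (2^n)` -/

def hch {n : ℕ} (x y : Fin (2 ^ n)) : ℝ :=
  (-1) ^ (∑ q : Fin n, (qbit x q : ℕ) * (qbit y q : ℕ))

lemma hch_comm {n : ℕ} (x y : Fin (2 ^ n)) : hch x y = hch y x := by
  unfold hch; congr 1
  exact Finset.sum_congr rfl fun q _ => mul_comm _ _

lemma hch_sq {n : ℕ} (x y : Fin (2 ^ n)) : hch x y ^ 2 = 1 := by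
  unfold hch
  rw [← pow_mul]
  exact Even.neg_one_pow ⟨_, by ring⟩

lemma qbit_equiv {n : ℕ} (g : Fin n → Fin 2) (q : Fin n) :
    qbit (finFunctionFinEquiv g) q = g q :=
  Fin.ext (congrArg Fin.val (congrFun (finFunctionFinEquiv.symm_apply_apply g) q))

lemma fin2_cases (a : Fin 2) : a = 0 ∨ a = 1 := by omega

lemma sum_hch_mul {n : ℕ} (y y' : Fin (2 ^ n)) :
    ∑ x : Fin (2 ^ n), hch x y * hch x y' = if y = y' then ((2:ℝ) ^ n) else 0 := by
  rw [← Equiv.sum_comp (finFunctionFinEquiv (m := 2) (n := n))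
    (fun x => hch x y * hch x y')]
  have h1 : ∀ g : Fin n → Fin 2,
      hch (finFunctionFinEquiv g) y * hch (finFunctionFinEquiv g) y'
      = ∏ q, ((-1:ℝ) ^ ((g q : ℕ) * (qbit y q : ℕ)) *
              (-1) ^ ((g q : ℕ) * (qbit y' q : ℕ))) := by
    intro g
    unfold hch
    simp only [qbit_equiv]
    rw [← Finset.prod_pow_eq_pow_sum, ← Finset.prod_pow_eq_pow_sum,
      ← Finset.prod_mul_distrib]
  simp only [h1]
  rw [← Fintype.prod_sum (fun q (b : Fin 2) =>
    ((-1:ℝ) ^ ((b : ℕ) * (qbit y q : ℕ)) * (-1) ^ ((b : ℕ) * (qbit y' q : ℕ))))]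
  have h2 : ∀ q, (∑ b : Fin 2, ((-1:ℝ) ^ ((b : ℕ) * (qbit y q : ℕ)) *
      (-1) ^ ((b : ℕ) * (qbit y' q : ℕ))))
      = if qbit y q = qbit y' q then 2 else 0 := by
    intro q
    rw [Fin.sum_univ_two]
    rcases fin2_cases (qbit y q) with h | h <;> rcases fin2_cases (qbit y' q) with h' | h' <;>
      rw [h, h'] <;> norm_num
  rw [Finset.prod_congr rfl fun q _ => h2 q]
  by_cases h : y = y'
  · subst h
    rw [if_pos rfl, Finset.prod_congr rfl fun q (_ : q ∈ univ) => if_pos rfl,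
      Finset.prod_const, Finset.card_univ, Fintype.card_fin]
  · rw [if_neg h]
    obtain ⟨q, hq⟩ : ∃ q, ¬ (qbit y q = qbit y' q) := by
      by_contra hc; push_neg at hc
      apply h
      have hsym : finFunctionFinEquiv.symm y = finFunctionFinEquiv.symm y' :=
        funext fun q => hc q
      exact finFunctionFinEquiv.symm.injective hsym
    exact Finset.prod_eq_zero (Finset.mem_univ q) (if_neg hq)

lemma sum_hch_linear_sq {n : ℕ} (t : Fin (2 ^ n) → ℝ) :
    ∑ x : Fin (2 ^ n), (∑ y, t y * hch x y) ^ 2 = (2:ℝ) ^ n * ∑ y, t y ^ 2 := by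
  have e1 : ∀ x : Fin (2 ^ n), (∑ y, t y * hch x y) ^ 2
      = ∑ y, ∑ z, (t y * t z) * (hch x y * hch x z) := by
    intro x; rw [sq, Finset.sum_mul_sum]
    exact Finset.sum_congr rfl fun y _ => Finset.sum_congr rfl fun z _ => by ring
  simp only [e1]
  rw [Finset.sum_comm]
  have e2 : ∀ y : Fin (2 ^ n),
      (∑ x : Fin (2 ^ n), ∑ z, (t y * t z) * (hch x y * hch x z))
      = ∑ z, ∑ x : Fin (2 ^ n), (t y * t z) * (hch x y * hch x z) := fun _ => Finset.sum_comm
  simp only [e2]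
  have e3 : ∀ y z : Fin (2 ^ n), (∑ x : Fin (2 ^ n), (t y * t z) * (hch x y * hch x z))
      = (t y * t z) * (if y = z then (2:ℝ) ^ n else 0) := fun y z => by
    rw [← Finset.mul_sum, sum_hch_mul]
  simp only [e3]
  have e4 : ∀ y : Fin (2 ^ n), (∑ z, (t y * t z) * (if y = z then (2:ℝ) ^ n else 0))
      = t y ^ 2 * (2:ℝ) ^ n := by
    intro y; rw [Finset.sum_eq_single y]
    · rw [if_pos rfl]; ring
    · intro z _ hz; rw [if_neg fun hh => hz hh.symm]; ring
    · exact fun hy => absurd (Finset.mem_univ y) hy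
  simp only [e4]
  rw [← Finset.sum_mul]; ring

/-! ### The basic approximating states -/

def IsSignVec {N : ℕ} (τ : Fin N → ℝ) : Prop := ∀ i, τ i = 1 ∨ τ i = -1

noncomputable def rsgn (r : ℝ) : ℝ := if r < 0 then -1 else 1

lemma rsgn_sign (r : ℝ) : rsgn r = 1 ∨ rsgn r = -1 := by
  unfold rsgn; by_cases h : r < 0 <;> simp [h]

lemma rsgn_mul (r : ℝ) : rsgn r * r = |r| := by
  unfold rsgn
  by_cases h : r < 0
  · rw [if_pos h, abs_of_neg h]; ring
  · rw [if_neg h, abs_of_nonneg (not_lt.mp h)]; ring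

noncomputable def stateVec {n : ℕ} (τ σ : Fin (2 ^ n) → ℝ) : Fin (2 ^ n) → ℝ :=
  fun x => σ x * (((2:ℝ) ^ n)⁻¹ * ∑ y, τ y * hch x y)

lemma stateVec_norm {n : ℕ} (τ σ : Fin (2 ^ n) → ℝ)
    (hτ : IsSignVec τ) (hσ : IsSignVec σ) :
    ∑ x, stateVec τ σ x ^ 2 = 1 := by
  have hσ2 : ∀ x, σ x ^ 2 = 1 := fun x => by rcases hσ x with h | h <;> rw [h] <;> norm_num
  have hτ2 : ∀ y, τ y ^ 2 = 1 := fun y => by rcases hτ y with h | h <;> rw [h] <;> norm_num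
  have h1 : ∀ x : Fin (2 ^ n), stateVec τ σ x ^ 2
      = (((2:ℝ) ^ n)⁻¹) ^ 2 * (∑ y, τ y * hch x y) ^ 2 := by
    intro x; rw [stateVec, mul_pow, mul_pow, hσ2 x, one_mul]
  rw [Finset.sum_congr rfl fun x _ => h1 x, ← Finset.mul_sum, sum_hch_linear_sq,
    Finset.sum_congr rfl fun y (_ : y ∈ univ) => hτ2 y, Finset.sum_const,
    Finset.card_univ, Fintype.card_fin, nsmul_eq_mul, mul_one]
  have h2 : ((2:ℝ) ^ n) ≠ 0 := by positivity
  push_cast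
  field_simp

lemma exists_good {n : ℕ} (u : Fin (2 ^ n) → ℝ) :
    ∃ τ σ : Fin (2 ^ n) → ℝ, IsSignVec τ ∧ IsSignVec σ ∧
      (∑ x, stateVec τ σ x ^ 2 = 1) ∧
      Real.sqrt (∑ x, u x ^ 2) ≤ Real.sqrt 2 * ∑ x, stateVec τ σ x * u x := by
  classical
  -- Step 1: a good auxiliary sign pattern ε via Khintchine + averaging
  have hstep1 : ∃ ε : Fin (2 ^ n) → Bool,
      (2:ℝ) ^ n * Real.sqrt (∑ x, u x ^ 2)
        ≤ Real.sqrt 2 * ∑ y, |∑ x, (|u x| * hch x y) * sg (ε x)| := by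
    have hkh : ∀ y : Fin (2 ^ n),
        Real.sqrt (∑ x, u x ^ 2) * (2:ℝ) ^ (2 ^ n)
          ≤ Real.sqrt 2 * ∑ ε : Fin (2 ^ n) → Bool, |∑ x, (|u x| * hch x y) * sg (ε x)| := by
      intro y
      have hk := khintchine (fun x => |u x| * hch x y)
      have hsq : ∑ x, (|u x| * hch x y) ^ 2 = ∑ x, u x ^ 2 :=
        Finset.sum_congr rfl fun x _ => by rw [mul_pow, sq_abs, hch_sq, mul_one]
      rw [hsq, Fintype.card_fin] at hk
      exact hk
    have hswap : ∑ ε : Fin (2 ^ n) → Bool,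
          (Real.sqrt 2 * ∑ y, |∑ x, (|u x| * hch x y) * sg (ε x)|)
        = Real.sqrt 2 * ∑ y, ∑ ε : Fin (2 ^ n) → Bool, |∑ x, (|u x| * hch x y) * sg (ε x)| := by
      rw [← Finset.mul_sum]
      congr 1
      exact Finset.sum_comm
    have hsum : ∑ ε : Fin (2 ^ n) → Bool, ((2:ℝ) ^ n * Real.sqrt (∑ x, u x ^ 2))
        ≤ ∑ ε : Fin (2 ^ n) → Bool,
            (Real.sqrt 2 * ∑ y, |∑ x, (|u x| * hch x y) * sg (ε x)|) := by
      rw [hswap, Finset.sum_const, Finset.card_univ, nsmul_eq_mul]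
      have hcard : (Fintype.card (Fin (2 ^ n) → Bool) : ℝ) = (2:ℝ) ^ (2 ^ n) := by
        rw [Fintype.card_fun, Fintype.card_bool, Fintype.card_fin]
        push_cast; ring
      rw [hcard]
      calc (2:ℝ) ^ (2 ^ n) * ((2:ℝ) ^ n * Real.sqrt (∑ x, u x ^ 2))
          = ∑ y : Fin (2 ^ n), (Real.sqrt (∑ x, u x ^ 2) * (2:ℝ) ^ (2 ^ n)) := by
            rw [Finset.sum_const, Finset.card_univ, Fintype.card_fin, nsmul_eq_mul]
            push_cast; ring
        _ ≤ ∑ y : Fin (2 ^ n), (Real.sqrt 2 *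
              ∑ ε : Fin (2 ^ n) → Bool, |∑ x, (|u x| * hch x y) * sg (ε x)|) :=
            Finset.sum_le_sum fun y _ => hkh y
        _ = Real.sqrt 2 * ∑ y, ∑ ε : Fin (2 ^ n) → Bool, |∑ x, (|u x| * hch x y) * sg (ε x)| := by
            rw [Finset.mul_sum]
    obtain ⟨ε, -, hε⟩ := Finset.exists_le_of_sum_le univ_nonempty hsum
    exact ⟨ε, hε⟩
  obtain ⟨ε, hε⟩ := hstep1
  set t : Fin (2 ^ n) → ℝ := fun y => ∑ x, (|u x| * hch x y) * sg (ε x) with ht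
  set τ : Fin (2 ^ n) → ℝ := fun y => rsgn (t y) with hτdef
  set w : Fin (2 ^ n) → ℝ := fun x => ∑ y, τ y * hch x y with hw
  set σ : Fin (2 ^ n) → ℝ := fun x => rsgn (u x * w x) with hσdef
  have hτsign : IsSignVec τ := fun y => rsgn_sign _
  have hσsign : IsSignVec σ := fun x => rsgn_sign _
  refine ⟨τ, σ, hτsign, hσsign, stateVec_norm τ σ hτsign hσsign, ?_⟩
  -- key chain
  have hswap2 : ∑ x, (sg (ε x) * |u x|) * w x = ∑ y, τ y * t y := by
    have e1 : ∀ x, (sg (ε x) * |u x|) * w x = ∑ y, (sg (ε x) * |u x|) * (τ y * hch x y) := by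
      intro x; rw [hw, Finset.mul_sum]
    rw [Finset.sum_congr rfl fun x _ => e1 x, Finset.sum_comm]
    refine Finset.sum_congr rfl fun y _ => ?_
    rw [ht, hτdef, Finset.mul_sum]
    exact Finset.sum_congr rfl fun x _ => by ring
  have habs : ∑ y, τ y * t y = ∑ y, |t y| :=
    Finset.sum_congr rfl fun y _ => rsgn_mul (t y)
  have hlow : ∑ y, |t y| ≤ ∑ x, |u x * w x| := by
    rw [← habs, ← hswap2]
    refine Finset.sum_le_sum fun x _ => ?_
    calc (sg (ε x) * |u x|) * w x ≤ |(sg (ε x) * |u x|) * w x| := le_abs_self _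
      _ = |sg (ε x)| * (|u x| * |w x|) := by rw [abs_mul, abs_mul, abs_abs]; ring
      _ = |u x * w x| := by
          have : |sg (ε x)| = 1 := by cases hb : ε x <;> norm_num [sg]
          rw [this, one_mul, ← abs_mul]
  have hstate : ∑ x, stateVec τ σ x * u x = ((2:ℝ) ^ n)⁻¹ * ∑ x, |u x * w x| := by
    rw [Finset.mul_sum]
    refine Finset.sum_congr rfl fun x _ => ?_
    have : stateVec τ σ x * u x = ((2:ℝ) ^ n)⁻¹ * (σ x * (u x * w x)) := by
      rw [stateVec, hw]; ring
    rw [this, hσdef, rsgn_mul]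
  have h2n : (0:ℝ) < (2:ℝ) ^ n := by positivity
  -- conclude
  rw [hstate]
  have hchain : (2:ℝ) ^ n * Real.sqrt (∑ x, u x ^ 2)
      ≤ Real.sqrt 2 * ∑ x, |u x * w x| := le_trans hε (by
        have h2 : (0:ℝ) ≤ Real.sqrt 2 := Real.sqrt_nonneg 2
        exact mul_le_mul_of_nonneg_left hlow h2)
  have := mul_le_mul_of_nonneg_left hchain (le_of_lt (inv_pos.mpr h2n))
  calc Real.sqrt (∑ x, u x ^ 2)
      = ((2:ℝ) ^ n)⁻¹ * ((2:ℝ) ^ n * Real.sqrt (∑ x, u x ^ 2)) := by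
        field_simp
    _ ≤ ((2:ℝ) ^ n)⁻¹ * (Real.sqrt 2 * ∑ x, |u x * w x|) := this
    _ = Real.sqrt 2 * (((2:ℝ) ^ n)⁻¹ * ∑ x, |u x * w x|) := by ring

/-! ### The greedy recursion -/

noncomputable def gtau {n : ℕ} (u : Fin (2 ^ n) → ℝ) : Fin (2 ^ n) → ℝ :=
  (exists_good u).choose

noncomputable def gsig {n : ℕ} (u : Fin (2 ^ n) → ℝ) : Fin (2 ^ n) → ℝ :=
  (exists_good u).choose_spec.choose

noncomputable def gphi {n : ℕ} (u : Fin (2 ^ n) → ℝ) : Fin (2 ^ n) → ℝ :=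
  stateVec (gtau u) (gsig u)

lemma gspec {n : ℕ} (u : Fin (2 ^ n) → ℝ) :
    IsSignVec (gtau u) ∧ IsSignVec (gsig u) ∧
      (∑ x, gphi u x ^ 2 = 1) ∧
      Real.sqrt (∑ x, u x ^ 2) ≤ Real.sqrt 2 * ∑ x, gphi u x * u x :=
  (exists_good u).choose_spec.choose_spec

noncomputable def resid {n : ℕ} (ψr : Fin (2 ^ n) → ℝ) : ℕ → (Fin (2 ^ n) → ℝ)
  | 0 => ψr
  | k + 1 => resid ψr k - ((Real.sqrt 2)⁻¹ ^ (k + 1)) • gphi (resid ψr k)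

lemma sqrt_two_pos : (0:ℝ) < Real.sqrt 2 := Real.sqrt_pos.mpr (by norm_num)

lemma sqrt_two_mul_self : Real.sqrt 2 * Real.sqrt 2 = 2 :=
  Real.mul_self_sqrt (by norm_num)

lemma inv_sqrt_two_sq : ((Real.sqrt 2)⁻¹) ^ 2 = (2:ℝ)⁻¹ := by
  rw [sq, ← mul_inv, sqrt_two_mul_self]

lemma resid_sq_le {n : ℕ} (ψr : Fin (2 ^ n) → ℝ) (h : ∑ x, ψr x ^ 2 = 1) :
    ∀ k, ∑ x, (resid ψr k x) ^ 2 ≤ ((2:ℝ)⁻¹) ^ k := by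
  intro k
  induction k with
  | zero => simp [resid, h]
  | succ k ih =>
    have hspec := gspec (resid ψr k)
    set r := resid ψr k with hr
    set φ := gphi (resid ψr k) with hφ
    set γ : ℝ := (Real.sqrt 2)⁻¹ ^ (k + 1) with hγ
    have hφn : ∑ x, φ x ^ 2 = 1 := hspec.2.2.1
    have hin : Real.sqrt (∑ x, r x ^ 2) ≤ Real.sqrt 2 * ∑ x, φ x * r x := hspec.2.2.2
    have hexp : ∑ x, (resid ψr (k + 1) x) ^ 2
        = (∑ x, r x ^ 2) - 2 * γ * (∑ x, φ x * r x) + γ ^ 2 * (∑ x, φ x ^ 2) := by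
      have e : ∀ x, (resid ψr (k + 1) x) ^ 2
          = r x ^ 2 - 2 * γ * (φ x * r x) + γ ^ 2 * φ x ^ 2 := by
        intro x
        show (r x - γ * φ x) ^ 2 = _
        ring
      rw [Finset.sum_congr rfl fun x _ => e x, Finset.sum_add_distrib,
        Finset.sum_sub_distrib, ← Finset.mul_sum, ← Finset.mul_sum]
    rw [hexp, hφn, mul_one]
    set ρ : ℝ := Real.sqrt (∑ x, r x ^ 2) with hρ
    have hρ0 : 0 ≤ ρ := Real.sqrt_nonneg _
    have hρsq : ρ ^ 2 = ∑ x, r x ^ 2 :=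
      Real.sq_sqrt (Finset.sum_nonneg fun x _ => sq_nonneg _)
    set δ : ℝ := (Real.sqrt 2)⁻¹ ^ k with hδ
    have hδ0 : 0 ≤ δ := by positivity
    have hδsq : δ ^ 2 = ((2:ℝ)⁻¹) ^ k := by
      rw [hδ, ← pow_mul, mul_comm k 2, pow_mul, inv_sqrt_two_sq]
    have hρδ : ρ ≤ δ := by
      have : ρ ≤ Real.sqrt (δ ^ 2) := Real.sqrt_le_sqrt (by rw [hδsq]; exact ih)
      rwa [Real.sqrt_sq hδ0] at this
    have hγδ : Real.sqrt 2 * γ = δ := by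
      rw [hγ, hδ, pow_succ]
      calc Real.sqrt 2 * ((Real.sqrt 2)⁻¹ ^ k * (Real.sqrt 2)⁻¹)
          = (Real.sqrt 2)⁻¹ ^ k * (Real.sqrt 2 * (Real.sqrt 2)⁻¹) := by ring
        _ = (Real.sqrt 2)⁻¹ ^ k := by
            rw [mul_inv_cancel₀ (ne_of_gt sqrt_two_pos), mul_one]
    have hγsq : γ ^ 2 = ((2:ℝ)⁻¹) ^ (k + 1) := by
      rw [hγ, ← pow_mul, mul_comm (k+1) 2, pow_mul, inv_sqrt_two_sq]
    have hγ0 : 0 ≤ γ := by positivity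
    set P : ℝ := ∑ x, φ x * r x with hP
    -- ρ ≤ √2 P hence ρ * δ ≤ 2 γ P; and ρ² ≤ ρ δ
    have h1 : ρ * δ ≤ 2 * γ * P := by
      have h2 : ρ * δ ≤ (Real.sqrt 2 * P) * δ := by
        exact mul_le_mul_of_nonneg_right hin hδ0
      calc ρ * δ ≤ (Real.sqrt 2 * P) * δ := h2
        _ = (Real.sqrt 2 * Real.sqrt 2) * γ * P := by rw [← hγδ]; ring
        _ = 2 * γ * P := by rw [sqrt_two_mul_self]
    have h3 : (∑ x, r x ^ 2) ≤ ρ * δ := by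
      rw [← hρsq]
      calc ρ ^ 2 = ρ * ρ := sq ρ
        _ ≤ ρ * δ := mul_le_mul_of_nonneg_left hρδ hρ0
    rw [hγsq]
    have hδρle : (∑ x, r x ^ 2) ≤ 2 * γ * P := le_trans h3 h1
    linarith [ih, hδρle]

lemma resid_formula {n : ℕ} (ψr : Fin (2 ^ n) → ℝ) (T : ℕ) (x : Fin (2 ^ n)) :
    resid ψr T x = ψr x - ∑ j ∈ Finset.range T, ((Real.sqrt 2)⁻¹ ^ (j + 1)) * gphi (resid ψr j) x := by
  induction T with
  | zero => simp [resid]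
  | succ T ih =>
    rw [Finset.sum_range_succ]
    show resid ψr T x - ((Real.sqrt 2)⁻¹ ^ (T + 1)) * gphi (resid ψr T) x = _
    rw [ih]; ring

/-! ### Matrix form of the states -/

lemma fin_pow_pos (n : ℕ) : 0 < 2 ^ n := pow_pos (by norm_num) n

lemma qbit_zero {n : ℕ} (q : Fin n) :
    (qbit (⟨0, fin_pow_pos n⟩ : Fin (2 ^ n)) q : ℕ) = 0 := by
  simp [qbit]

lemma had_e0 {n : ℕ} :
    (hadamardPow n).mulVec (e0 n) = fun _ => (((Real.sqrt (2 ^ n) : ℝ)) : ℂ)⁻¹ := by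
  funext y
  simp only [Matrix.mulVec, dotProduct, hadamardPow, Matrix.of_apply, e0]
  rw [Finset.sum_eq_single (⟨0, fin_pow_pos n⟩ : Fin (2 ^ n))]
  · rw [if_pos rfl]
    have hz : ∀ q : Fin n,
        (qbit y q : ℕ) * (qbit (⟨0, fin_pow_pos n⟩ : Fin (2 ^ n)) q : ℕ) = 0 := by
      intro q; rw [qbit_zero, mul_zero]
    rw [Finset.sum_congr rfl fun q _ => hz q, Finset.sum_const, smul_zero, pow_zero,
      mul_one, mul_one]
  · intro j _ hj
    rw [if_neg (fun h0 => hj (Fin.ext h0)), mul_zero]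
  · intro h; exact absurd (Finset.mem_univ _) h

lemma mulVec_state {n : ℕ} (τ σ : Fin (2 ^ n) → ℝ) :
    (Matrix.diagonal (fun i => ((σ i : ℝ) : ℂ)) * hadamardPow n *
        Matrix.diagonal (fun i => ((τ i : ℝ) : ℂ)) * hadamardPow n).mulVec (e0 n)
      = fun x => ((stateVec τ σ x : ℝ) : ℂ) := by
  rw [← Matrix.mulVec_mulVec, ← Matrix.mulVec_mulVec, ← Matrix.mulVec_mulVec, had_e0]
  have hinner : (Matrix.diagonal (fun i => ((τ i : ℝ) : ℂ))).mulVec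
      (fun _ => (((Real.sqrt (2 ^ n) : ℝ)) : ℂ)⁻¹)
      = fun y => (τ y : ℂ) * (((Real.sqrt (2 ^ n) : ℝ)) : ℂ)⁻¹ := by
    funext y; rw [Matrix.mulVec_diagonal]
  rw [hinner]
  funext x
  rw [Matrix.mulVec_diagonal]
  simp only [Matrix.mulVec, dotProduct, hadamardPow, Matrix.of_apply]
  have hterm : ∀ y : Fin (2 ^ n),
      ((Real.sqrt (2 ^ n) : ℂ))⁻¹ * (-1) ^ (∑ q : Fin n, (qbit x q : ℕ) * (qbit y q : ℕ)) *
        ((τ y : ℂ) * ((Real.sqrt (2 ^ n) : ℂ))⁻¹)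
      = ((((Real.sqrt ((2:ℝ) ^ n))⁻¹ * hch x y * (τ y * (Real.sqrt ((2:ℝ) ^ n))⁻¹)) : ℝ) : ℂ) := by
    intro y
    rw [hch]
    push_cast
    ring
  rw [Finset.sum_congr rfl fun y _ => hterm y, ← Complex.ofReal_sum]
  have hreal : σ x * (∑ y, (Real.sqrt ((2:ℝ) ^ n))⁻¹ * hch x y * (τ y * (Real.sqrt ((2:ℝ) ^ n))⁻¹))
      = stateVec τ σ x := by
    have hs : (Real.sqrt ((2:ℝ) ^ n))⁻¹ * (Real.sqrt ((2:ℝ) ^ n))⁻¹ = ((2:ℝ) ^ n)⁻¹ := by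
      rw [← mul_inv, Real.mul_self_sqrt (by positivity)]
    have e : ∀ y, (Real.sqrt ((2:ℝ) ^ n))⁻¹ * hch x y * (τ y * (Real.sqrt ((2:ℝ) ^ n))⁻¹)
        = ((Real.sqrt ((2:ℝ) ^ n))⁻¹ * (Real.sqrt ((2:ℝ) ^ n))⁻¹) * (τ y * hch x y) :=
      fun y => by ring
    rw [Finset.sum_congr rfl fun y _ => e y, ← Finset.mul_sum, hs, stateVec]
  rw [← hreal]
  push_cast
  ring

/-! ### Exponent bookkeeping -/

lemma rpow_neg_half (k : ℕ) : (2:ℝ) ^ (-(k:ℝ)/2) = ((Real.sqrt 2)⁻¹) ^ k := by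
  have h1 : ((Real.sqrt 2)⁻¹ : ℝ) = (2:ℝ) ^ ((-1:ℝ)/2) := by
    rw [Real.sqrt_eq_rpow, ← Real.rpow_neg (by norm_num : (0:ℝ) ≤ 2)]
    norm_num
  rw [h1, ← Real.rpow_natCast ((2:ℝ) ^ ((-1:ℝ)/2)) k, ← Real.rpow_mul (by norm_num : (0:ℝ) ≤ 2)]
  congr 1; ring

lemma l2norm_ofReal {N : ℕ} (v : Fin N → ℝ) :
    l2norm (fun i => ((v i : ℝ) : ℂ)) = Real.sqrt (∑ i, v i ^ 2) := by
  rw [l2norm]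
  congr 1
  exact Finset.sum_congr rfl fun i _ => by rw [Complex.normSq_ofReal, sq]

end QAux
end

/-- Lemma 5: approximating a real state as a weighted sum of
`B₂ H^{⊗n} B₁ H^{⊗n} |0^n⟩` states. -/
theorem approx_coeff_simple (n : ℕ) (hn : 1 ≤ n) (ψ : Fin (2 ^ n) → ℂ)
    (hψ : l2norm ψ = 1) (hreal : ∀ i, (ψ i).im = 0) (T : ℕ) (hT : 1 ≤ T) :
    ∃ (ζ : ℝ) (ψs : Fin T → Fin (2 ^ n) → ℂ),
      (Real.sqrt 2 - 1) / 2 ≤ ζ ∧ ζ ≤ (Real.sqrt 2)⁻¹ ∧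
      (∀ k, l2norm (ψs k) = 1) ∧
      (∀ k : Fin T, ∃ B₁ B₂ : Matrix (Fin (2 ^ n)) (Fin (2 ^ n)) ℂ,
        IsPhaseOracle B₁ ∧ IsPhaseOracle B₂ ∧
        ψs k = (B₂ * hadamardPow n * B₁ * hadamardPow n).mulVec (e0 n)) ∧
      l2norm (ψ - (ζ : ℂ) •
          ∑ k : Fin T, (((2 : ℝ) ^ (-(k : ℝ) / 2) : ℝ) : ℂ) • ψs k)
        ≤ (Real.sqrt 2 - 1)⁻¹ * (2 : ℝ) ^ (-(T : ℝ) / 4) := by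
  classical
  set ψr : Fin (2 ^ n) → ℝ := fun x => (ψ x).re with hψrdef
  have hψx : ∀ x, ψ x = ((ψr x : ℝ) : ℂ) := by
    intro x
    apply Complex.ext
    · simp [hψrdef]
    · simp [hψrdef, hreal x]
  have hsum1 : ∑ x, ψr x ^ 2 = 1 := by
    have h1 : ∑ x, Complex.normSq (ψ x) = 1 := Real.sqrt_eq_one.mp hψ
    rw [← h1]
    exact Finset.sum_congr rfl fun x _ => by rw [hψx x, Complex.normSq_ofReal, sq]
  have hs2 := QAux.sqrt_two_mul_self
  have hs2nn : (0:ℝ) ≤ Real.sqrt 2 := Real.sqrt_nonneg 2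
  have hs2pos := QAux.sqrt_two_pos
  refine ⟨(Real.sqrt 2)⁻¹,
    fun k => fun x => ((QAux.gphi (QAux.resid ψr (k : ℕ)) x : ℝ) : ℂ),
    ?_, le_rfl, ?_, ?_, ?_⟩
  · -- (√2 − 1)/2 ≤ (√2)⁻¹
    have hc := mul_inv_cancel₀ (ne_of_gt hs2pos)
    have hinv : (0:ℝ) ≤ (Real.sqrt 2)⁻¹ := inv_nonneg.mpr hs2nn
    nlinarith
  · intro k
    rw [QAux.l2norm_ofReal, (QAux.gspec (QAux.resid ψr (k : ℕ))).2.2.1]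
    exact Real.sqrt_one
  · intro k
    refine ⟨Matrix.diagonal (fun y => ((QAux.gtau (QAux.resid ψr (k : ℕ)) y : ℝ) : ℂ)),
      Matrix.diagonal (fun y => ((QAux.gsig (QAux.resid ψr (k : ℕ)) y : ℝ) : ℂ)),
      ⟨_, fun i => ?_, rfl⟩, ⟨_, fun i => ?_, rfl⟩, (QAux.mulVec_state _ _).symm⟩
    · rcases (QAux.gspec (QAux.resid ψr (k : ℕ))).1 i with h | h <;> rw [h]
      · left; exact Complex.ofReal_one
      · right; push_cast; ring
    · rcases (QAux.gspec (QAux.resid ψr (k : ℕ))).2.1 i with h | h <;> rw [h]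
      · left; exact Complex.ofReal_one
      · right; push_cast; ring
  · -- the distance bound
    have hvec : (ψ - (((Real.sqrt 2)⁻¹ : ℝ) : ℂ) •
        ∑ k : Fin T, ((((2:ℝ) ^ (-(k : ℝ)/2) : ℝ)) : ℂ) •
          (fun x => ((QAux.gphi (QAux.resid ψr (k : ℕ)) x : ℝ) : ℂ)))
        = fun x => ((QAux.resid ψr T x : ℝ) : ℂ) := by
      funext x
      simp only [Pi.sub_apply, Pi.smul_apply, Finset.sum_apply, smul_eq_mul]
      rw [QAux.resid_formula, hψx x]
      have hfin : (∑ k : Fin T, ((((2:ℝ) ^ (-(k : ℝ)/2) : ℝ)) : ℂ) *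
            ((QAux.gphi (QAux.resid ψr (k : ℕ)) x : ℝ) : ℂ))
          = ∑ j ∈ Finset.range T, ((((2:ℝ) ^ (-(j : ℝ)/2) : ℝ)) : ℂ) *
            ((QAux.gphi (QAux.resid ψr j) x : ℝ) : ℂ) :=
        Fin.sum_univ_eq_sum_range
          (fun j => ((((2:ℝ) ^ (-(j : ℝ)/2) : ℝ)) : ℂ) *
            ((QAux.gphi (QAux.resid ψr j) x : ℝ) : ℂ)) T
      rw [hfin]
      simp only [QAux.rpow_neg_half]
      push_cast
      rw [Finset.mul_sum]
      congr 1
      refine Finset.sum_congr rfl fun j _ => ?_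
      ring
    rw [hvec, QAux.l2norm_ofReal]
    have hb := QAux.resid_sq_le ψr hsum1 T
    have h1 : Real.sqrt (∑ x, QAux.resid ψr T x ^ 2) ≤ Real.sqrt (((2:ℝ)⁻¹) ^ T) :=
      Real.sqrt_le_sqrt hb
    have h2 : Real.sqrt (((2:ℝ)⁻¹) ^ T) = (2:ℝ) ^ (-(T:ℝ)/2) := by
      have e : ((2:ℝ)⁻¹) ^ T = (((Real.sqrt 2)⁻¹) ^ T) ^ 2 := by
        rw [← pow_mul, mul_comm T 2, pow_mul, QAux.inv_sqrt_two_sq]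
      rw [e, Real.sqrt_sq (by positivity)]
      exact (QAux.rpow_neg_half T).symm
    have h3 : (2:ℝ) ^ (-(T:ℝ)/2) ≤ (2:ℝ) ^ (-(T:ℝ)/4) :=
      Real.rpow_le_rpow_of_exponent_le (by norm_num)
        (by have hT0 : (0:ℝ) ≤ (T:ℝ) := Nat.cast_nonneg T; linarith)
    have hd1 : (0:ℝ) < Real.sqrt 2 - 1 := by nlinarith
    have hd2 : Real.sqrt 2 - 1 ≤ 1 := by nlinarith
    have h4 : (1:ℝ) ≤ (Real.sqrt 2 - 1)⁻¹ := by
      have hc := mul_inv_cancel₀ (ne_of_gt hd1)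
      nlinarith [inv_nonneg.mpr (le_of_lt hd1)]
    have h5 : (2:ℝ) ^ (-(T:ℝ)/4) ≤ (Real.sqrt 2 - 1)⁻¹ * (2:ℝ) ^ (-(T:ℝ)/4) :=
      le_mul_of_one_le_left (by positivity) h4
    calc Real.sqrt (∑ x, QAux.resid ψr T x ^ 2)
        ≤ Real.sqrt (((2:ℝ)⁻¹) ^ T) := h1
      _ = (2:ℝ) ^ (-(T:ℝ)/2) := h2
      _ ≤ (2:ℝ) ^ (-(T:ℝ)/4) := h3
      _ ≤ (Real.sqrt 2 - 1)⁻¹ * (2:ℝ) ^ (-(T:ℝ)/4) := h5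
end
end

section
/- Let n ≥ 1 be an integer and let U and V be 2^n × 2^n unitary matrices. Then √(1 − |⟨ι_U, ι_V⟩|²) ≥ (1/√2)·inf_{θ ∈ [0, 2π)} ‖U − e^{iθ}·V‖_hs, where ⟨u, v⟩ = Σ conj(u_i)·v_i. (The left-hand side is the trace distance between the Choi states ι_U and ι_V.) -/
open scoped BigOperators
open scoped Matrix

noncomputable section

lemma choi_apply {n : ℕ} (U : Matrix (Fin (2 ^ n)) (Fin (2 ^ n)) ℂ) (i : Fin (2 ^ (n + n))) :
    choi U i = ((Real.sqrt (2 ^ n) : ℂ))⁻¹ *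
      U ⟨(i : ℕ) % 2 ^ n, Nat.mod_lt _ (pow_pos (by norm_num) n)⟩ ⟨(i : ℕ) / 2 ^ n, tensor_div_lt i⟩ := by
  simp [choi, vecTensor, Matrix.mulVec, dotProduct, Finset.sum_apply,
    ite_mul, mul_ite, mul_zero, zero_mul, Finset.sum_ite_eq, Finset.sum_ite_eq']

lemma sum_divmod {n : ℕ} (F : Fin (2 ^ n) → Fin (2 ^ n) → ℂ) :
    ∑ i : Fin (2 ^ (n + n)),
        F ⟨(i : ℕ) % 2 ^ n, Nat.mod_lt _ (pow_pos (by norm_num) n)⟩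
          ⟨(i : ℕ) / 2 ^ n, tensor_div_lt i⟩
      = ∑ x : Fin (2 ^ n), ∑ r : Fin (2 ^ n), F r x := by
  have hNpos : 0 < 2 ^ n := pow_pos (by norm_num) n
  have hcard : 2 ^ (n + n) = 2 ^ n * 2 ^ n := by rw [pow_add]
  have key : ∀ (x r : Fin (2 ^ n)), 2 ^ n * (x : ℕ) + (r : ℕ) < 2 ^ (n + n) := by
    intro x r
    calc 2 ^ n * (x : ℕ) + (r : ℕ) < 2 ^ n * (x : ℕ) + 2 ^ n := by omega
      _ = 2 ^ n * ((x : ℕ) + 1) := by ring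
      _ ≤ 2 ^ n * 2 ^ n := Nat.mul_le_mul_left _ (by omega)
      _ = 2 ^ (n + n) := hcard.symm
  rw [← Finset.sum_product', Finset.univ_product_univ]
  have hbij : Function.Bijective (fun p : Fin (2 ^ n) × Fin (2 ^ n) =>
      (⟨2 ^ n * (p.1 : ℕ) + (p.2 : ℕ), key p.1 p.2⟩ : Fin (2 ^ (n + n)))) := by
    rw [Fintype.bijective_iff_injective_and_card]
    constructor
    · rintro ⟨x, r⟩ ⟨x', r'⟩ h
      simp only [Fin.mk.injEq] at h
      have h1 : (r : ℕ) = (r' : ℕ) := by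
        have := congrArg (· % 2 ^ n) h
        simpa [Nat.mul_add_mod, Nat.mod_eq_of_lt r.isLt, Nat.mod_eq_of_lt r'.isLt] using this
      have h2 : (x : ℕ) = (x' : ℕ) := by
        have h3 : 2 ^ n * (x : ℕ) = 2 ^ n * (x' : ℕ) := by omega
        exact Nat.eq_of_mul_eq_mul_left hNpos h3
      ext <;> simp [h1, h2]
    · simp [hcard]
  refine (Fintype.sum_bijective _ hbij (fun p => F p.2 p.1) _ ?_).symm
  rintro ⟨x, r⟩
  have hm : (2 ^ n * (x : ℕ) + (r : ℕ)) % 2 ^ n = (r : ℕ) := by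
    simp [Nat.mul_add_mod, Nat.mod_eq_of_lt r.isLt]
  have hd : (2 ^ n * (x : ℕ) + (r : ℕ)) / 2 ^ n = (x : ℕ) := by
    rw [Nat.mul_add_div hNpos, Nat.div_eq_of_lt r.isLt]; simp
  simp only [hm, hd, Fin.eta]

lemma cInner_choi {n : ℕ} (U W : Matrix (Fin (2 ^ n)) (Fin (2 ^ n)) ℂ) :
    cInner (choi U) (choi W) = (Uᴴ * W).trace / (2 ^ n : ℂ) := by
  have hpos : (0 : ℝ) < 2 ^ n := by positivity
  have hc : (starRingEnd ℂ) ((Real.sqrt (2 ^ n) : ℂ))⁻¹ = ((Real.sqrt (2 ^ n) : ℂ))⁻¹ := by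
    rw [map_inv₀, Complex.conj_ofReal]
  have hcc : ((Real.sqrt (2 ^ n) : ℂ))⁻¹ * ((Real.sqrt (2 ^ n) : ℂ))⁻¹ = ((2 : ℂ) ^ n)⁻¹ := by
    rw [← mul_inv, ← Complex.ofReal_mul, Real.mul_self_sqrt hpos.le]
    norm_num
  have step : ∀ i : Fin (2 ^ (n + n)), (starRingEnd ℂ) (choi U i) * choi W i
      = ((2 : ℂ) ^ n)⁻¹ *
        ((starRingEnd ℂ)
            (U ⟨(i : ℕ) % 2 ^ n, Nat.mod_lt _ (pow_pos (by norm_num) n)⟩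
              ⟨(i : ℕ) / 2 ^ n, tensor_div_lt i⟩) *
          W ⟨(i : ℕ) % 2 ^ n, Nat.mod_lt _ (pow_pos (by norm_num) n)⟩
            ⟨(i : ℕ) / 2 ^ n, tensor_div_lt i⟩) := by
    intro i
    rw [choi_apply, choi_apply, map_mul, hc]
    rw [show ∀ c a b : ℂ, c * a * (c * b) = c * c * (a * b) from fun _ _ _ => by ring, hcc]
  rw [cInner, Finset.sum_congr rfl (fun i _ => step i), ← Finset.mul_sum,
    sum_divmod (fun r x => (starRingEnd ℂ) (U r x) * W r x)]
  rw [Matrix.trace]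
  simp only [Matrix.diag, Matrix.mul_apply, Matrix.conjTranspose_apply]
  rw [inv_mul_eq_div]
  rfl

lemma sum_abs_sq_eq {n : ℕ} (A : Matrix (Fin (2 ^ n)) (Fin (2 ^ n)) ℂ)
    (hA : Aᴴ * A = 1) :
    ∑ p : Fin (2 ^ n) × Fin (2 ^ n), ‖A p.2 p.1‖ ^ 2 = 2 ^ n := by
  have h := congrArg Matrix.trace hA
  rw [Matrix.trace_one] at h
  rw [Matrix.trace] at h
  simp only [Matrix.diag, Matrix.mul_apply, Matrix.conjTranspose_apply] at h
  have h2 : ∀ (z : ℂ), star z * z = ((‖z‖ ^ 2 : ℝ) : ℂ) := by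
    intro z
    rw [Complex.sq_norm]
    exact (Complex.normSq_eq_conj_mul_self (z := z)).symm
  simp only [h2] at h
  have h4 : ∑ x : Fin (2 ^ n), ∑ j : Fin (2 ^ n), ‖A j x‖ ^ 2
      = (Fintype.card (Fin (2 ^ n)) : ℝ) := by exact_mod_cast h
  rw [← Finset.univ_product_univ, Finset.sum_product, h4]
  simp

lemma abs_trace_le {n : ℕ} (U V : Matrix (Fin (2 ^ n)) (Fin (2 ^ n)) ℂ)
    (hU : Uᴴ * U = 1) (hV : Vᴴ * V = 1) :
    ‖(Uᴴ * V).trace‖ ≤ 2 ^ n := by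
  have htr : (Uᴴ * V).trace
      = ∑ p : Fin (2 ^ n) × Fin (2 ^ n), star (U p.2 p.1) * V p.2 p.1 := by
    rw [Matrix.trace, ← Finset.univ_product_univ, Finset.sum_product]
    simp only [Matrix.diag, Matrix.mul_apply, Matrix.conjTranspose_apply]
  rw [htr]
  calc ‖∑ p : Fin (2 ^ n) × Fin (2 ^ n), star (U p.2 p.1) * V p.2 p.1‖
      ≤ ∑ p : Fin (2 ^ n) × Fin (2 ^ n), ‖star (U p.2 p.1) * V p.2 p.1‖ :=
        norm_sum_le _ _
    _ = ∑ p : Fin (2 ^ n) × Fin (2 ^ n), ‖U p.2 p.1‖ * ‖V p.2 p.1‖ := by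
        simp [norm_mul]
    _ ≤ Real.sqrt (∑ p : Fin (2 ^ n) × Fin (2 ^ n), ‖U p.2 p.1‖ ^ 2) *
        Real.sqrt (∑ p : Fin (2 ^ n) × Fin (2 ^ n), ‖V p.2 p.1‖ ^ 2) :=
        Real.sum_mul_le_sqrt_mul_sqrt _ _ _
    _ = 2 ^ n := by
        rw [sum_abs_sq_eq U hU, sum_abs_sq_eq V hV, Real.mul_self_sqrt (by positivity)]

lemma trace_expand {n : ℕ} (U V : Matrix (Fin (2 ^ n)) (Fin (2 ^ n)) ℂ)
    (hU : Uᴴ * U = 1) (hV : Vᴴ * V = 1) (z : ℂ) (hz : star z * z = 1) :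
    ((U - z • V)ᴴ * (U - z • V)).trace
      = 2 * (2 ^ n : ℂ) - (z * (Uᴴ * V).trace + star (z * (Uᴴ * V).trace)) := by
  have hVU : (Vᴴ * U).trace = star (Uᴴ * V).trace := by
    rw [← Matrix.trace_conjTranspose, Matrix.conjTranspose_mul, Matrix.conjTranspose_conjTranspose]
  simp only [Matrix.conjTranspose_sub, Matrix.conjTranspose_smul, Matrix.sub_mul, Matrix.mul_sub,
    Matrix.smul_mul, Matrix.mul_smul, Matrix.trace_sub, Matrix.trace_smul, hU, hV,
    Matrix.trace_one, smul_eq_mul, hVU]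
  rw [star_mul']
  simp only [Fintype.card_fin]
  push_cast
  linear_combination ((2 : ℂ) ^ n) * hz

lemma exists_good_theta (τ : ℂ) : ∃ θ : ℝ, θ ∈ Set.Ico (0 : ℝ) (2 * Real.pi) ∧
    Complex.exp (Complex.I * (θ : ℂ)) * τ = (‖τ‖ : ℂ) := by
  have hpi := Real.pi_pos
  set a := ‖τ‖ with ha
  set r := τ.arg with hr
  have hτ : (a : ℂ) * Complex.exp ((r : ℂ) * Complex.I) = τ := Complex.norm_mul_exp_arg_mul_I τ
  have base : Complex.exp (Complex.I * ((-r : ℝ) : ℂ)) * τ = (a : ℂ) := by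
    rw [← hτ, mul_comm ((a : ℂ)) _, ← mul_assoc, ← Complex.exp_add,
      show Complex.I * ((-r : ℝ) : ℂ) + (r : ℂ) * Complex.I = 0 by push_cast; ring,
      Complex.exp_zero, one_mul]
  have harg1 : r ≤ Real.pi := Complex.arg_le_pi τ
  have harg2 : -Real.pi < r := Complex.neg_pi_lt_arg τ
  rcases le_or_gt r 0 with h | h
  · exact ⟨-r, ⟨by linarith, by linarith⟩, base⟩
  · refine ⟨2 * Real.pi - r, ⟨by linarith, by linarith⟩, ?_⟩
    rw [show (Complex.I * ((2 * Real.pi - r : ℝ) : ℂ)) =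
        2 * (Real.pi : ℂ) * Complex.I + Complex.I * ((-r : ℝ) : ℂ) by push_cast; ring,
      Complex.exp_add, Complex.exp_two_pi_mul_I, one_mul, base]


/-- Fact 28: trace distance between Choi states versus
normalized Hilbert–Schmidt distance of the unitaries. -/
theorem choi_to_unitary (n : ℕ) (hn : 1 ≤ n)
    (U V : Matrix (Fin (2 ^ n)) (Fin (2 ^ n)) ℂ)
    (hU : U ∈ Matrix.unitaryGroup (Fin (2 ^ n)) ℂ)
    (hV : V ∈ Matrix.unitaryGroup (Fin (2 ^ n)) ℂ) :
    (Real.sqrt 2)⁻¹ *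
        ⨅ θ : Set.Ico (0 : ℝ) (2 * Real.pi),
          hsnorm (U - Complex.exp (Complex.I * ((θ : ℝ) : ℂ)) • V)
      ≤ Real.sqrt (1 - ‖cInner (choi U) (choi V)‖ ^ 2) := by
  have hpos : (0 : ℝ) < 2 ^ n := by positivity
  have hU1 : Uᴴ * U = 1 := by
    have := (Unitary.mem_iff.mp hU).1
    rwa [Matrix.star_eq_conjTranspose] at this
  have hV1 : Vᴴ * V = 1 := by
    have := (Unitary.mem_iff.mp hV).1
    rwa [Matrix.star_eq_conjTranspose] at this
  set τ := (Uᴴ * V).trace with hτ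
  set a := ‖τ‖ with ha
  have ha0 : 0 ≤ a := norm_nonneg τ
  have haN : a ≤ 2 ^ n := abs_trace_le U V hU1 hV1
  obtain ⟨θ₀, hθmem, hzτ⟩ := exists_good_theta τ
  set z := Complex.exp (Complex.I * (θ₀ : ℂ)) with hzdef
  have hzu : star z * z = 1 := by
    have hstarz : (starRingEnd ℂ) z = Complex.exp (-(Complex.I * (θ₀ : ℂ))) := by
      rw [hzdef, ← Complex.exp_conj]
      congr 1
      simp [Complex.conj_ofReal]
    show (starRingEnd ℂ) z * z = 1
    rw [hstarz, hzdef, ← Complex.exp_add, neg_add_cancel, Complex.exp_zero]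
  have htr := trace_expand U V hU1 hV1 z hzu
  rw [hzτ] at htr
  have hstar : star ((a : ℝ) : ℂ) = ((a : ℝ) : ℂ) := Complex.conj_ofReal a
  rw [hstar] at htr
  have htr2 : ((U - z • V)ᴴ * (U - z • V)).trace = (((2 * 2 ^ n - 2 * a : ℝ)) : ℂ) := by
    rw [htr]; push_cast; ring
  have hhs : hsnorm (U - z • V) = Real.sqrt ((2 * 2 ^ n - 2 * a) / 2 ^ n) := by
    rw [hsnorm, htr2, Complex.ofReal_re]
    norm_num
  have hbdd : BddBelow (Set.range fun θ : Set.Ico (0 : ℝ) (2 * Real.pi) =>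
      hsnorm (U - Complex.exp (Complex.I * ((θ : ℝ) : ℂ)) • V)) := by
    refine ⟨0, ?_⟩
    rintro x ⟨θ, rfl⟩
    exact Real.sqrt_nonneg _
  have hinf : (⨅ θ : Set.Ico (0 : ℝ) (2 * Real.pi),
        hsnorm (U - Complex.exp (Complex.I * ((θ : ℝ) : ℂ)) • V))
      ≤ hsnorm (U - z • V) := ciInf_le_of_le hbdd ⟨θ₀, hθmem⟩ le_rfl
  have habs : ‖cInner (choi U) (choi V)‖ = a / 2 ^ n := by
    rw [cInner_choi, norm_div, ← hτ, ← ha]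
    norm_num [norm_pow]
  rw [habs]
  have hb0 : 0 ≤ a / 2 ^ n := by positivity
  have hb1 : a / 2 ^ n ≤ 1 := by rw [div_le_one hpos]; exact haN
  calc (Real.sqrt 2)⁻¹ * ⨅ θ : Set.Ico (0 : ℝ) (2 * Real.pi),
          hsnorm (U - Complex.exp (Complex.I * ((θ : ℝ) : ℂ)) • V)
      ≤ (Real.sqrt 2)⁻¹ * hsnorm (U - z • V) :=
        mul_le_mul_of_nonneg_left hinf (by positivity)
    _ = Real.sqrt (1 - a / 2 ^ n) := by
        rw [hhs, ← Real.sqrt_inv, ← Real.sqrt_mul (by norm_num : (0 : ℝ) ≤ 2⁻¹)]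
        congr 1
        field_simp
    _ ≤ Real.sqrt (1 - (a / 2 ^ n) ^ 2) := by
        apply Real.sqrt_le_sqrt
        nlinarith
end
end
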